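/- arXiv:1704.06744 — 4 statements merged into one kernel-verified Lean document; each statement's English description precedes it below -/
import Mathlib

section
/- There exists a constant c(n) > 0, depending only on n, such that for every real κ with 0 < κ < 1/4 and every real K ≥ 1, the n-dimensional Lebesgue measure of the set of ω ∈ [0,2π]^n for which there exist k ∈ ℤ^n with 0 < |k| ≤ K and j ∈ ℤ satisfying |⟨k,ω⟩ + j| < κ(1+|j|) is at most c(n)·K^{n+1}·κ. Equivalently, the complement D' = {ω ∈ [0,2π]^n : |⟨k,ω⟩ + j| ≥ κ(1+|j|) for all j ∈ ℤ and all k ∈ ℤ^n with 0 < |k| ≤ K} satisfies Meas([0,2π]^n \ D') ≤ c(n)K^{n+1}κ. -/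
open MeasureTheory Set

lemma slice_bound (m : ℕ) (k : Fin (m+1) → ℤ) (i : Fin (m+1)) (hki : k i ≠ 0)
    (t ε : ℝ) (hε : 0 ≤ ε) :
    volume {ω : Fin (m+1) → ℝ | ω ∈ Set.Icc 0 (fun _ => 2 * Real.pi) ∧
        |∑ l, (k l : ℝ) * ω l + t| < ε} ≤
      ENNReal.ofReal ((2 * Real.pi) ^ m * (2 * ε / |(k i : ℝ)|)) := by
  set S : Set (Fin (m+1) → ℝ) := {ω | ω ∈ Set.Icc 0 (fun _ => 2 * Real.pi) ∧
        |∑ l, (k l : ℝ) * ω l + t| < ε} with hS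
  have hf : Measurable fun ω : Fin (m+1) → ℝ => |∑ l, (k l : ℝ) * ω l + t| := by
    fun_prop
  have hSm : MeasurableSet S := by
    apply measurableSet_Icc.inter
    exact measurableSet_lt hf measurable_const
  set e := MeasurableEquiv.piFinSuccAbove (fun _ : Fin (m+1) => ℝ) i with he
  have mp := measurePreserving_piFinSuccAbove (fun _ : Fin (m+1) => (volume : Measure ℝ)) i
  have hT : MeasurableSet (e.symm ⁻¹' S) := e.symm.measurable hSm
  have h1 : volume S = ((volume : Measure ℝ).prod volume) (e.symm ⁻¹' S) := by
    have := (mp.symm e).measure_preimage hSm.nullMeasurableSet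
    simpa [MeasureTheory.volume_pi] using this.symm
  rw [h1, Measure.prod_apply_symm hT]
  have key : ∀ y : Fin m → ℝ,
      volume ((fun x => (x, y)) ⁻¹' (e.symm ⁻¹' S)) ≤
        (Set.Icc (0 : Fin m → ℝ) (fun _ => 2 * Real.pi)).indicator
          (fun _ => ENNReal.ofReal (2 * ε / |(k i : ℝ)|)) y := by
    intro y
    have hins : ∀ x : ℝ, e.symm (x, y) = i.insertNth x y := fun x => rfl
    by_cases hy : y ∈ Set.Icc (0 : Fin m → ℝ) (fun _ => 2 * Real.pi)
    · rw [Set.indicator_of_mem hy]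
      have hki' : (0:ℝ) < |(k i : ℝ)| := abs_pos.2 (Int.cast_ne_zero.2 hki)
      set b : ℝ := (∑ j, (k (i.succAbove j) : ℝ) * y j) + t with hb
      have hsub : (fun x => (x, y)) ⁻¹' (e.symm ⁻¹' S) ⊆
          Metric.ball (-b / (k i : ℝ)) (ε / |(k i : ℝ)|) := by
        intro x hx
        set ω' : Fin (m+1) → ℝ := i.insertNth x y with hω'
        have hx' : ω' ∈ S := hx
        obtain ⟨-, habs⟩ := hx'
        have hsum : ∑ l, (k l : ℝ) * ω' l + t = (k i : ℝ) * x + b := by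
          rw [Fin.sum_univ_succAbove (fun l => (k l : ℝ) * ω' l) i]
          simp [hω', hb]; ring
        rw [hsum] at habs
        have h2 : |((k i : ℝ) * x + b) / (k i : ℝ)| < ε / |(k i : ℝ)| := by
          rw [abs_div]
          exact (div_lt_div_iff_of_pos_right hki').2 habs
        have h3 : x - (-b / (k i : ℝ)) = ((k i : ℝ) * x + b) / (k i : ℝ) := by
          field_simp
          ring
        simpa [Real.dist_eq, h3] using h2
      calc volume _ ≤ volume (Metric.ball (-b / (k i : ℝ)) (ε / |(k i : ℝ)|)) :=
            measure_mono hsub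
        _ = ENNReal.ofReal (2 * (ε / |(k i : ℝ)|)) := Real.volume_ball _ _
        _ = ENNReal.ofReal (2 * ε / |(k i : ℝ)|) := by rw [mul_div_assoc]
    · rw [Set.indicator_of_notMem hy]
      have hempty : (fun x => (x, y)) ⁻¹' (e.symm ⁻¹' S) = ∅ := by
        ext x
        simp only [Set.mem_preimage, Set.mem_empty_iff_false, iff_false]
        intro hx
        rw [hins x] at hx
        have hx' : (i.insertNth x y : Fin (m+1) → ℝ) ∈ S := hx
        obtain ⟨hbox, -⟩ := hx'
        apply hy
        constructor
        · intro j
          have := hbox.1 (i.succAbove j)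
          simpa using this
        · intro j
          have := hbox.2 (i.succAbove j)
          simpa using this
      rw [hempty, measure_empty]
  calc ∫⁻ y, volume ((fun x => (x, y)) ⁻¹' (e.symm ⁻¹' S)) ≤
      ∫⁻ y, (Set.Icc (0 : Fin m → ℝ) (fun _ => 2 * Real.pi)).indicator
          (fun _ => ENNReal.ofReal (2 * ε / |(k i : ℝ)|)) y := lintegral_mono key
    _ = ENNReal.ofReal (2 * ε / |(k i : ℝ)|) *
          volume (Set.Icc (0 : Fin m → ℝ) (fun _ => 2 * Real.pi)) :=
        lintegral_indicator_const measurableSet_Icc _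
    _ ≤ ENNReal.ofReal ((2 * Real.pi) ^ m * (2 * ε / |(k i : ℝ)|)) := by
        rw [Real.volume_Icc_pi]
        simp only [Pi.zero_apply, sub_zero, Finset.prod_const, Finset.card_univ,
          Fintype.card_fin]
        rw [← ENNReal.ofReal_pow Real.two_pi_pos.le, ← ENNReal.ofReal_mul (by positivity),
          mul_comm]

lemma jbound (m : ℕ) (κ : ℝ) (hκ : 0 < κ) (hκ4 : κ < 1/4)
    (k : Fin (m+1) → ℤ) (j : ℤ) (ω : Fin (m+1) → ℝ)
    (hω : ω ∈ Set.Icc 0 (fun _ => 2 * Real.pi))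
    (hA : 1 ≤ ∑ i, |k i|)
    (h : |∑ i, (k i : ℝ) * ω i + (j : ℝ)| < κ * (1 + |(j : ℝ)|)) :
    (|j| : ℝ) ≤ 9 * ((∑ i, |k i| : ℤ) : ℝ) := by
  set A : ℝ := ((∑ i, |k i| : ℤ) : ℝ) with hAdef
  have hA1 : 1 ≤ A := by rw [hAdef]; exact_mod_cast hA
  have hsum : |∑ i, (k i : ℝ) * ω i| ≤ 2 * Real.pi * A := by
    calc |∑ i, (k i : ℝ) * ω i| ≤ ∑ i, |(k i : ℝ) * ω i| :=
          Finset.abs_sum_le_sum_abs _ _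
      _ ≤ ∑ i, |(k i : ℝ)| * (2 * Real.pi) := by
          refine Finset.sum_le_sum fun i _ => ?_
          rw [abs_mul]
          refine mul_le_mul_of_nonneg_left ?_ (abs_nonneg _)
          rw [abs_of_nonneg (hω.1 i)]
          exact hω.2 i
      _ = 2 * Real.pi * A := by
          rw [hAdef]
          push_cast
          rw [← Finset.sum_mul]
          ring
  have hj : |(j : ℝ)| ≤ |∑ i, (k i : ℝ) * ω i + (j : ℝ)| + |∑ i, (k i : ℝ) * ω i| := by
    have h' := abs_add_le (∑ i, (k i : ℝ) * ω i + (j : ℝ)) (-(∑ i, (k i : ℝ) * ω i))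
    simp only [abs_neg] at h'
    have heq : (∑ i, (k i : ℝ) * ω i + (j : ℝ)) + (-(∑ i, (k i : ℝ) * ω i)) = (j : ℝ) := by ring
    rw [heq] at h'
    exact h'
  have hpi : Real.pi < 3.15 := Real.pi_lt_d2
  nlinarith [abs_nonneg (j : ℝ), Real.pi_pos]

set_option maxHeartbeats 2000000 in
theorem statement0' (m : ℕ) :
    ∀ κ K : ℝ, 0 < κ → κ < 1 / 4 → 1 ≤ K →
      MeasureTheory.volume
        {ω : Fin (m+1) → ℝ | ω ∈ Set.Icc 0 (fun _ => 2 * Real.pi) ∧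
          ∃ (k : Fin (m+1) → ℤ) (j : ℤ),
            0 < ∑ i, |k i| ∧ ((∑ i, |k i| : ℤ) : ℝ) ≤ K ∧
            |∑ i, (k i : ℝ) * ω i + (j : ℝ)| < κ * (1 + |(j : ℝ)|)} ≤
      ENNReal.ofReal ((760 * (m+1:ℝ)^2 * 5^(m+1) * (2*Real.pi)^m) * K ^ (m + 2) * κ) := by
  intro κ K hκ hκ4 hK
  set Kc : ℤ := ⌈K⌉ with hKc
  have hKKc : K ≤ (Kc : ℝ) := Int.le_ceil K
  have hKc1 : (1:ℤ) ≤ Kc := by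
    have h1 : (1:ℝ) ≤ (Kc:ℝ) := le_trans hK hKKc
    exact_mod_cast h1
  have hKcR : (Kc : ℝ) ≤ K + 1 := by
    have := Int.ceil_lt_add_one K
    linarith
  -- the family of resonant sets
  set T : (Fin (m+1) → ℤ) → ℤ → Set (Fin (m+1) → ℝ) := fun k j =>
    {ω | ω ∈ Set.Icc 0 (fun _ => 2 * Real.pi) ∧
      |∑ i, (k i : ℝ) * ω i + (j : ℝ)| < κ * (1 + |(j : ℝ)|)} with hT
  set Kset : Finset (Fin (m+1) → ℤ) :=
    (Fintype.piFinset fun _ => Finset.Icc (-Kc) Kc).filter (fun k => k ≠ 0) with hKset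
  set Jset : Finset ℤ := Finset.Icc (-(9*Kc)) (9*Kc) with hJset
  -- containment
  have hsub : {ω : Fin (m+1) → ℝ | ω ∈ Set.Icc 0 (fun _ => 2 * Real.pi) ∧
          ∃ (k : Fin (m+1) → ℤ) (j : ℤ),
            0 < ∑ i, |k i| ∧ ((∑ i, |k i| : ℤ) : ℝ) ≤ K ∧
            |∑ i, (k i : ℝ) * ω i + (j : ℝ)| < κ * (1 + |(j : ℝ)|)} ⊆
      ⋃ k ∈ Kset, ⋃ j ∈ Jset, T k j := by
    rintro ω ⟨hbox, k, j, hpos, hKk, habs⟩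
    have hAKc : ∑ i, |k i| ≤ Kc := by
      have : ((∑ i, |k i| : ℤ) : ℝ) ≤ (Kc : ℝ) := hKk.trans hKKc
      exact_mod_cast this
    have hki : ∀ i, |k i| ≤ Kc := fun i =>
      le_trans (Finset.single_le_sum (fun l _ => abs_nonneg (k l)) (Finset.mem_univ i)) hAKc
    have hkmem : k ∈ Kset := by
      rw [hKset, Finset.mem_filter]
      constructor
      · rw [Fintype.mem_piFinset]
        intro i
        rw [Finset.mem_Icc]
        exact abs_le.1 (hki i)
      · intro hk0
        rw [hk0] at hpos
        simp at hpos
    have hjmem : j ∈ Jset := by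
      have hjb := jbound m κ hκ hκ4 k j ω hbox hpos habs
      have : (|j| : ℝ) ≤ 9 * (Kc : ℝ) := by
        have h9 : (9:ℝ) * ((∑ i, |k i| : ℤ) : ℝ) ≤ 9 * (Kc : ℝ) := by
          have : ((∑ i, |k i| : ℤ) : ℝ) ≤ (Kc : ℝ) := by exact_mod_cast hAKc
          linarith
        linarith
      have hjZ : |j| ≤ 9 * Kc := by exact_mod_cast this
      rw [hJset, Finset.mem_Icc]
      exact abs_le.1 hjZ
    exact Set.mem_biUnion hkmem (Set.mem_biUnion hjmem ⟨hbox, habs⟩)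
  refine le_trans (measure_mono hsub) ?_
  refine le_trans (measure_biUnion_finset_le Kset _) ?_
  have inner : ∀ k ∈ Kset,
      volume (⋃ j ∈ Jset, T k j) ≤
        ENNReal.ofReal (760 * (m+1:ℝ)^2 * (2*Real.pi)^m * κ * K) := by
    intro k hk
    rw [hKset, Finset.mem_filter, Fintype.mem_piFinset] at hk
    obtain ⟨hmem, hk0⟩ := hk
    -- basic facts about k
    obtain ⟨l₀, hl₀⟩ := Function.ne_iff.1 hk0
    have hl₀' : k l₀ ≠ 0 := by simpa using hl₀
    obtain ⟨i₀, -, hmax⟩ := Finset.exists_max_image Finset.univ (fun l => |k l|)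
      ⟨l₀, Finset.mem_univ l₀⟩
    have hki₀ : k i₀ ≠ 0 := by
      intro h0
      have h1 : (1:ℤ) ≤ |k l₀| := Int.one_le_abs hl₀'
      have h2 := hmax l₀ (Finset.mem_univ l₀)
      rw [h0, abs_zero] at h2
      omega
    set A : ℤ := ∑ i, |k i| with hA
    have hA1 : (1:ℤ) ≤ A := by
      have h1 : (1:ℤ) ≤ |k l₀| := Int.one_le_abs hl₀'
      have h2 : |k l₀| ≤ A :=
        Finset.single_le_sum (fun l _ => abs_nonneg (k l)) (Finset.mem_univ l₀)
      omega
    have hAmax : A ≤ (m+1) * |k i₀| := by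
      calc A = ∑ i, |k i| := hA
        _ ≤ ∑ _i : Fin (m+1), |k i₀| := Finset.sum_le_sum fun i _ => hmax i (Finset.mem_univ i)
        _ = (m+1) * |k i₀| := by simp [Finset.sum_const, mul_comm]
    have hAKc : A ≤ (m+1) * Kc := by
      calc A = ∑ i, |k i| := hA
        _ ≤ ∑ _i : Fin (m+1), Kc := Finset.sum_le_sum fun i _ => by
            have := hmem i; rw [Finset.mem_Icc] at this; exact abs_le.2 this
        _ = (m+1) * Kc := by simp [Finset.sum_const, mul_comm]
    have hki₀R : (1:ℝ) ≤ |(k i₀ : ℝ)| := by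
      have : (1:ℤ) ≤ |k i₀| := Int.one_le_abs hki₀
      exact_mod_cast this
    set c₂ : ℝ := 20 * (m+1:ℝ) * (2*Real.pi)^m * κ with hc₂
    have hc₂0 : 0 ≤ c₂ := by positivity
    -- per j bound
    have perj : ∀ j ∈ Jset, volume (T k j) ≤
        if |j| ≤ 9 * A then ENNReal.ofReal c₂ else 0 := by
      intro j _
      by_cases hP : |j| ≤ 9 * A
      · rw [if_pos hP]
        refine le_trans (slice_bound m k i₀ hki₀ (j : ℝ) (κ * (1 + |(j:ℝ)|))
          (by positivity)) ?_
        apply ENNReal.ofReal_le_ofReal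
        have hjR : |(j:ℝ)| ≤ 9 * (A:ℝ) := by exact_mod_cast hP
        have hAR : (A:ℝ) ≤ (m+1) * |(k i₀ : ℝ)| := by exact_mod_cast hAmax
        have hAR1 : (1:ℝ) ≤ (A:ℝ) := by exact_mod_cast hA1
        have hdiv : 2 * (κ * (1 + |(j:ℝ)|)) / |(k i₀ : ℝ)| ≤ 20 * (m+1:ℝ) * κ := by
          rw [div_le_iff₀ (by linarith : (0:ℝ) < |(k i₀ : ℝ)|)]
          nlinarith [hκ.le, mul_le_mul_of_nonneg_left hAR (by linarith : (0:ℝ) ≤ 10 * κ)]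
        calc (2*Real.pi)^m * (2 * (κ * (1 + |(j:ℝ)|)) / |(k i₀ : ℝ)|)
            ≤ (2*Real.pi)^m * (20 * (m+1:ℝ) * κ) :=
              mul_le_mul_of_nonneg_left hdiv (by positivity)
          _ = c₂ := by rw [hc₂]; ring
      · rw [if_neg hP]
        have hept : T k j = ∅ := by
          rw [Set.eq_empty_iff_forall_notMem]
          rintro ω ⟨hbox, habs⟩
          apply hP
          have := jbound m κ hκ hκ4 k j ω hbox hA1 habs
          exact_mod_cast this
        rw [hept, measure_empty]
    -- sum over j
    calc volume (⋃ j ∈ Jset, T k j) ≤ ∑ j ∈ Jset, volume (T k j) :=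
          measure_biUnion_finset_le Jset _
      _ ≤ ∑ j ∈ Jset, (if |j| ≤ 9 * A then ENNReal.ofReal c₂ else 0) :=
          Finset.sum_le_sum perj
      _ = ∑ j ∈ Jset.filter (fun j => |j| ≤ 9 * A), ENNReal.ofReal c₂ :=
          (Finset.sum_filter _ _).symm
      _ = (Jset.filter (fun j => |j| ≤ 9 * A)).card • ENNReal.ofReal c₂ :=
          Finset.sum_const _
      _ ≤ ENNReal.ofReal (760 * (m+1:ℝ)^2 * (2*Real.pi)^m * κ * K) := by
          have hcard : (Jset.filter (fun j => |j| ≤ 9 * A)).card ≤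
              (Finset.Icc (-(9*A)) (9*A)).card := by
            apply Finset.card_le_card
            intro j hj
            rw [Finset.mem_filter] at hj
            rw [Finset.mem_Icc]
            exact abs_le.1 hj.2
          have hicc : ((Finset.Icc (-(9*A)) (9*A)).card : ℝ) ≤ 19 * (A:ℝ) := by
            rw [Int.card_Icc]
            have h1 : (9*A + 1 - (-(9*A))) = 18*A + 1 := by ring
            rw [h1]
            have h2 : ((18*A+1).toNat : ℝ) = ((18*A+1 : ℤ) : ℝ) := by
              rw [← Int.cast_natCast, Int.toNat_of_nonneg (by omega)]
            rw [h2]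
            have hAR1 : (1:ℝ) ≤ (A:ℝ) := by exact_mod_cast hA1
            push_cast
            linarith
          have hcardR : ((Jset.filter (fun j => |j| ≤ 9 * A)).card : ℝ) ≤ 19 * (A:ℝ) :=
            le_trans (by exact_mod_cast hcard) hicc
          rw [nsmul_eq_mul]
          have : ((Jset.filter (fun j => |j| ≤ 9 * A)).card : ENNReal) =
              ENNReal.ofReal ((Jset.filter (fun j => |j| ≤ 9 * A)).card : ℝ) := by
            rw [ENNReal.ofReal_natCast]
          rw [this, ← ENNReal.ofReal_mul (by positivity)]
          apply ENNReal.ofReal_le_ofReal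
          have hAR : (A:ℝ) ≤ (m+1) * (K+1) := by
            have : ((A:ℤ):ℝ) ≤ (((m+1) * Kc : ℤ):ℝ) := by exact_mod_cast hAKc
            push_cast at this
            nlinarith [hKcR]
          have hA2K : (A:ℝ) ≤ 2 * (m+1) * K := by nlinarith
          have hAR0 : (0:ℝ) ≤ (A:ℝ) := by positivity
          calc ((Jset.filter (fun j => |j| ≤ 9 * A)).card : ℝ) * c₂
              ≤ (19 * (A:ℝ)) * c₂ := mul_le_mul_of_nonneg_right hcardR hc₂0
            _ ≤ (19 * (2 * (m+1) * K)) * c₂ := by nlinarith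
            _ ≤ 760 * (m+1:ℝ)^2 * (2*Real.pi)^m * κ * K := by
                rw [hc₂]
                nlinarith [pow_pos (by positivity : (0:ℝ) < 2*Real.pi) m, hκ.le, hK]
  refine le_trans (Finset.sum_le_sum inner) ?_
  rw [Finset.sum_const, nsmul_eq_mul]
  have hKsetcard : ((Kset.card : ℝ)) ≤ (5*K)^(m+1) := by
    have h1 : Kset.card ≤ (Fintype.piFinset fun _ : Fin (m+1) => Finset.Icc (-Kc) Kc).card :=
      Finset.card_le_card (Finset.filter_subset _ _)
    have h2 : (Fintype.piFinset fun _ : Fin (m+1) => Finset.Icc (-Kc) Kc).card =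
        ((Kc + 1 - (-Kc)).toNat)^(m+1) := by
      rw [Fintype.card_piFinset]
      simp [Int.card_Icc]
    have h3 : (((Kc + 1 - (-Kc)).toNat : ℝ)) ≤ 5*K := by
      have : ((Kc + 1 - (-Kc)).toNat : ℝ) = ((Kc + 1 - (-Kc) : ℤ) : ℝ) := by
        rw [← Int.cast_natCast, Int.toNat_of_nonneg (by omega)]
      rw [this]
      push_cast
      linarith
    calc ((Kset.card : ℝ)) ≤ (((Fintype.piFinset fun _ : Fin (m+1) =>
            Finset.Icc (-Kc) Kc).card : ℝ)) := by exact_mod_cast h1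
      _ = (((Kc + 1 - (-Kc)).toNat : ℝ))^(m+1) := by rw [h2]; push_cast; ring
      _ ≤ (5*K)^(m+1) := by
          apply pow_le_pow_left₀ (by positivity) h3
  have hcast : ((Kset.card : ENNReal)) = ENNReal.ofReal (Kset.card : ℝ) := by
    rw [ENNReal.ofReal_natCast]
  rw [hcast, ← ENNReal.ofReal_mul (by positivity)]
  apply ENNReal.ofReal_le_ofReal
  have hB0 : (0:ℝ) ≤ 760 * (m+1:ℝ)^2 * (2*Real.pi)^m * κ * K := by positivity
  calc (Kset.card : ℝ) * (760 * (m+1:ℝ)^2 * (2*Real.pi)^m * κ * K)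
      ≤ (5*K)^(m+1) * (760 * (m+1:ℝ)^2 * (2*Real.pi)^m * κ * K) :=
        mul_le_mul_of_nonneg_right hKsetcard hB0
    _ = (760 * (m+1:ℝ)^2 * 5^(m+1) * (2*Real.pi)^m) * K ^ (m + 2) * κ := by
        rw [mul_pow]
        ring

/-- (Lemma 3.2 / Hypothesis A2 for the harmonic oscillator.)
There is a constant `c(n) > 0` such that for all `0 < κ < 1/4` and `K ≥ 1`, the Lebesgue
measure of the set of `ω ∈ [0,2π]^n` for which some `k ∈ ℤ^n` with `0 < |k| ≤ K` and some
`j ∈ ℤ` satisfy `|⟨k,ω⟩ + j| < κ(1+|j|)` is at most `c(n) K^{n+1} κ`. -/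
theorem statement0 (n : ℕ) (hn : 1 ≤ n) :
    ∃ c : ℝ, 0 < c ∧ ∀ κ K : ℝ, 0 < κ → κ < 1 / 4 → 1 ≤ K →
      MeasureTheory.volume
        {ω : Fin n → ℝ | ω ∈ Set.Icc 0 (fun _ => 2 * Real.pi) ∧
          ∃ (k : Fin n → ℤ) (j : ℤ),
            0 < ∑ i, |k i| ∧ ((∑ i, |k i| : ℤ) : ℝ) ≤ K ∧
            |∑ i, (k i : ℝ) * ω i + (j : ℝ)| < κ * (1 + |(j : ℝ)|)} ≤
      ENNReal.ofReal (c * K ^ (n + 1) * κ) := by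
  obtain ⟨m, rfl⟩ : ∃ m, n = m + 1 := ⟨n - 1, (Nat.succ_pred_eq_of_pos hn).symm⟩
  refine ⟨760 * (m+1:ℝ)^2 * 5^(m+1) * (2*Real.pi)^m, by positivity, ?_⟩
  intro κ K hκ hκ4 hK
  have := statement0' m κ K hκ hκ4 hK
  exact this
end

section
/- Let X be a complex Banach space, n ≥ 1 an integer, 0 < ι < 1, c > 0, and 0 < σ ≤ 1/4; set σ_ν = σ^{(3/2)^ν}. Suppose f₀ = 0 and, for each ν ≥ 1, f_ν : ℂ^n → X is holomorphic on the open strip {z ∈ ℂ^n : |Im z_j| < σ_ν for all j} with sup_{|Im z_j| < σ_ν} ‖f_ν(z) − f_{ν−1}(z)‖_X ≤ c·σ_ν^{ι}. Then the limit f(x) = lim_{ν→∞} f_ν(x) exists for every x ∈ ℝ^n and satisfies: (i) sup_{x∈ℝ^n} ‖f(x)‖_X ≤ (2c/ι)·σ^{ι}, and (ii) ‖f(x) − f(y)‖_X ≤ (4c/(ι(1−ι)))·|x−y|^{ι} for all x, y ∈ ℝ^n with 0 < |x−y| ≤ 1 (Euclidean norm on ℝ^n). -/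
open Metric Set Filter

lemma key_ineq {a : ℝ} (h0 : 0 < a) (h1 : a < 1) :
    (2:ℝ) ^ (-(3 * a / 2)) ≤ 1 - a / 2 := by
  have hl2 : (0.6931471803 : ℝ) < Real.log 2 := Real.log_two_gt_d9
  set y : ℝ := 3 * a / 2 * Real.log 2 with hy
  have hy0 : 0 < y := by positivity
  have h2 : (2:ℝ) ^ (-(3 * a / 2)) = Real.exp (-y) := by
    rw [Real.rpow_def_of_pos two_pos, hy]; ring_nf
  have h3 : Real.exp (-y) ≤ (1 + y)⁻¹ := by
    rw [Real.exp_neg]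
    have := Real.add_one_le_exp y
    exact inv_anti₀ (by linarith) (by linarith)
  have h5 : 1 ≤ (1 - a/2) * (1 + y) := by
    have t1 : 0 ≤ a * (1 - a) := mul_nonneg h0.le (by linarith)
    nlinarith
  have hpos : (0:ℝ) < 1 + y := by linarith
  have h4 : (1 + y)⁻¹ ≤ 1 - a / 2 := by
    rw [← one_div, div_le_iff₀ hpos]; linarith
  linarith [h2 ▸ (h3.trans h4)]

lemma strip_lipschitz {X : Type*} [NormedAddCommGroup X] [NormedSpace ℂ X]
    {h : ℂ → X} {r M : ℝ} (hr : 0 < r)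
    (hd : DifferentiableOn ℂ h {w : ℂ | |w.im| < r})
    (hb : ∀ w : ℂ, |w.im| < r → ‖h w‖ ≤ M) (a b : ℝ) :
    ‖h a - h b‖ ≤ 2 * M / r * |a - b| := by
  have hopen : IsOpen {w : ℂ | |w.im| < r} :=
    isOpen_lt (Complex.continuous_im.abs) continuous_const
  have hmem : ∀ t : ℝ, ((t:ℂ)) ∈ {w : ℂ | |w.im| < r} := fun t => by
    simp only [mem_setOf_eq, Complex.ofReal_im, abs_zero]; exact hr
  have hball : ∀ t : ℝ, ball (t:ℂ) r ⊆ {w : ℂ | |w.im| < r} := by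
    intro t w hw
    have h1 : |(w - t).im| ≤ ‖w - t‖ := Complex.abs_im_le_norm _
    have h2 : (w - (t:ℂ)).im = w.im := by simp
    have h3 : ‖w - t‖ < r := by rwa [mem_ball, Complex.dist_eq] at hw
    simp only [mem_setOf_eq]; rw [← h2]; exact h1.trans_lt h3
  have hder : ∀ t : ℝ, ‖deriv h (t:ℂ)‖ ≤ 2 * M / r := by
    intro t
    refine le_of_forall_pos_le_add fun ε hε => ?_
    have hmaps : MapsTo h (ball (t:ℂ) r) (ball (h t) (2*M + ε*r)) := by
      intro w hw
      have h1 : ‖h w - h t‖ ≤ 2*M :=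
        (norm_sub_le _ _).trans (by
          have := add_le_add (hb _ (hball t hw)) (hb _ (hmem t)); linarith)
      have : dist (h w) (h t) < 2*M + ε*r := by
        rw [dist_eq_norm]; nlinarith
      exact this
    have hkey := Complex.norm_deriv_le_div_of_mapsTo_ball (hd.mono (hball t)) (hmaps.mono_right ball_subset_closedBall) hr
    calc ‖deriv h (t:ℂ)‖ ≤ (2*M + ε*r)/r := hkey
    _ = 2*M/r + ε := by field_simp
  have hda : ∀ t : ℝ, HasDerivAt (fun s : ℝ => h (s:ℂ)) (deriv h (t:ℂ)) t := by
    intro t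
    have hdiff : DifferentiableAt ℂ h (t:ℂ) := hd.differentiableAt (hopen.mem_nhds (hmem t))
    have hc : HasDerivAt h (deriv h (t:ℂ)) (t:ℂ) := hdiff.hasDerivAt
    have := hc.scomp t Complex.ofRealCLM.hasDerivAt
    simpa [Function.comp_def] using this
  have := Convex.norm_image_sub_le_of_norm_hasDerivWithin_le
    (f := fun s : ℝ => h (s:ℂ)) (f' := fun t : ℝ => deriv h (t:ℂ)) (s := univ)
    (fun t _ => (hda t).hasDerivWithinAt) (fun t _ => hder t) convex_univ (mem_univ b) (mem_univ a)
  simpa [Real.norm_eq_abs] using this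

set_option maxHeartbeats 2000000 in
/-- Core case `0 < ι < 1` of the converse approximation lemma, with the
explicit constants of the paper's appendix: the limit `f` of the `f_ν` on `ℝ^n` satisfies
`sup ‖f‖ ≤ (2c/ι)σ^ι` and the Hölder bound `‖f(x) − f(y)‖ ≤ (4c/(ι(1−ι)))|x−y|^ι` for
`0 < |x−y| ≤ 1` (Euclidean norm on `ℝ^n`). -/
theorem statement3 (X : Type*) [NormedAddCommGroup X] [NormedSpace ℂ X] [CompleteSpace X]
    (n : ℕ) (hn : 1 ≤ n) (ι c σ : ℝ)
    (hι0 : 0 < ι) (hι1 : ι < 1) (hc : 0 < c) (hσ0 : 0 < σ) (hσ : σ ≤ 1 / 4)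
    (f : ℕ → (Fin n → ℂ) → X) (hf0 : f 0 = 0)
    (hol : ∀ ν : ℕ, 1 ≤ ν →
      DifferentiableOn ℂ (f ν) {z : Fin n → ℂ | ∀ j, |(z j).im| < σ ^ ((3 / 2 : ℝ) ^ ν)})
    (hbd : ∀ ν : ℕ, 1 ≤ ν → ∀ z : Fin n → ℂ, (∀ j, |(z j).im| < σ ^ ((3 / 2 : ℝ) ^ ν)) →
      ‖f ν z - f (ν - 1) z‖ ≤ c * (σ ^ ((3 / 2 : ℝ) ^ ν)) ^ ι) :
    ∃ g : EuclideanSpace ℝ (Fin n) → X,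
      (∀ x : EuclideanSpace ℝ (Fin n),
        Filter.Tendsto (fun ν => f ν (fun i => (x i : ℂ))) Filter.atTop (nhds (g x))) ∧
      (∀ x : EuclideanSpace ℝ (Fin n), ‖g x‖ ≤ 2 * c / ι * σ ^ ι) ∧
      (∀ x y : EuclideanSpace ℝ (Fin n), x ≠ y → dist x y ≤ 1 →
        ‖g x - g y‖ ≤ 4 * c / (ι * (1 - ι)) * dist x y ^ ι) := by
  have hσ1 : σ ≤ 1 := hσ.trans (by norm_num)
  set s : ℕ → ℝ := fun ν => σ ^ ((3 / 2 : ℝ) ^ ν) with hsdef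
  have hspos : ∀ ν, 0 < s ν := fun ν => Real.rpow_pos_of_pos hσ0 _
  have hmonoexp : ∀ {a b : ℝ}, a ≤ b → σ ^ b ≤ σ ^ a := fun hab =>
    Real.rpow_le_rpow_of_exponent_ge hσ0 hσ1 hab
  have hpow32 : ∀ ν : ℕ, (0:ℝ) < (3/2:ℝ)^ν := fun ν => by positivity
  have hexp : ∀ ν k : ℕ, (3/2:ℝ)^ν * (1 + (k:ℝ)/2) ≤ (3/2:ℝ)^(ν+k) := by
    intro ν k
    induction k with
    | zero => simp
    | succ k ih =>
      rw [show ν + (k+1) = (ν+k)+1 from rfl, pow_succ]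
      have hle : (3/2:ℝ)^ν ≤ (3/2:ℝ)^(ν+k) :=
        pow_le_pow_right₀ (by norm_num) (Nat.le_add_right ν k)
      push_cast at ih ⊢
      nlinarith [hpow32 ν, hpow32 (ν+k)]
  have hsmono : ∀ {μ ν : ℕ}, μ ≤ ν → s ν ≤ s μ := by
    intro μ ν hμν
    exact hmonoexp (pow_le_pow_right₀ (by norm_num) hμν)
  have h18 : ∀ ν : ℕ, 1 ≤ ν → s ν ≤ (2:ℝ)^(-3:ℝ) := by
    intro ν hν
    have h1 : s ν ≤ s 1 := hsmono hν
    have h2 : s 1 = σ ^ ((3:ℝ)/2) := by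
      simp only [hsdef, pow_one]
    have h3 : σ ^ ((3:ℝ)/2) ≤ ((1:ℝ)/4) ^ ((3:ℝ)/2) :=
      Real.rpow_le_rpow hσ0.le hσ (by norm_num)
    have h4 : ((1:ℝ)/4) ^ ((3:ℝ)/2) = (2:ℝ)^(-3:ℝ) := by
      have e1 : ((1:ℝ)/4) = (2:ℝ)^(-2:ℝ) := by
        have := Real.rpow_intCast (2:ℝ) (-2)
        norm_num at this; linarith
      rw [e1, ← Real.rpow_mul (by norm_num : (0:ℝ) ≤ 2)]; norm_num
    rw [h2] at h1
    exact h1.trans (h3.trans_eq h4)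
  have hsk : ∀ ν k : ℕ, s (ν + k) ≤ s ν * s ν ^ ((k:ℝ)/2) := by
    intro ν k
    have h1 : s ν * s ν ^ ((k:ℝ)/2) = σ ^ ((3/2:ℝ)^ν * (1 + (k:ℝ)/2)) := by
      simp only [hsdef]
      rw [← Real.rpow_mul hσ0.le, ← Real.rpow_add hσ0]
      congr 1; ring
    rw [h1]
    exact hmonoexp (hexp ν k)
  have hrpowk : ∀ (e : ℝ) (k : ℕ), ((2:ℝ)^e)^k = (2:ℝ)^(e * k) := by
    intro e k
    rw [← Real.rpow_natCast ((2:ℝ)^e) k, ← Real.rpow_mul (by norm_num : (0:ℝ) ≤ 2)]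
  set ρ : ℝ := (2:ℝ) ^ (-(3 * ι / 2)) with hρdef
  set q : ℝ := (2:ℝ) ^ (-(3 * (1 - ι) / 2)) with hqdef
  have hρ0 : 0 ≤ ρ := (Real.rpow_pos_of_pos two_pos _).le
  have hρ1 : ρ < 1 := Real.rpow_lt_one_of_one_lt_of_neg one_lt_two (by nlinarith)
  have hρι : ι/2 ≤ 1 - ρ := by
    have := key_ineq hι0 hι1; linarith
  have hq0 : 0 ≤ q := (Real.rpow_pos_of_pos two_pos _).le
  have hq1 : q < 1 := Real.rpow_lt_one_of_one_lt_of_neg one_lt_two (by nlinarith)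
  have hqι : (1-ι)/2 ≤ 1 - q := by
    have := key_ineq (a := 1 - ι) (by linarith) (by linarith); linarith
  -- term bound for tails
  have hterm : ∀ ν k : ℕ, 1 ≤ ν → s (ν+k) ^ ι ≤ s ν ^ ι * ρ ^ k := by
    intro ν k hν
    have h1 : s (ν+k) ^ ι ≤ (s ν * s ν ^ ((k:ℝ)/2)) ^ ι :=
      Real.rpow_le_rpow (hspos _).le (hsk ν k) hι0.le
    have h2 : (s ν * s ν ^ ((k:ℝ)/2)) ^ ι = s ν ^ ι * (s ν ^ ((k:ℝ)/2)) ^ ι :=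
      Real.mul_rpow (hspos _).le (Real.rpow_nonneg (hspos _).le _)
    have h3 : (s ν ^ ((k:ℝ)/2)) ^ ι ≤ ρ ^ k := by
      have e1 : (s ν ^ ((k:ℝ)/2)) ^ ι = s ν ^ ((k:ℝ)/2 * ι) :=
        (Real.rpow_mul (hspos _).le _ _).symm
      have e2 : s ν ^ ((k:ℝ)/2 * ι) ≤ ((2:ℝ)^(-3:ℝ)) ^ ((k:ℝ)/2 * ι) :=
        Real.rpow_le_rpow (hspos _).le (h18 ν hν) (by positivity)
      have e3 : ((2:ℝ)^(-3:ℝ)) ^ ((k:ℝ)/2 * ι) = ρ ^ k := by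
        rw [← Real.rpow_mul (by norm_num : (0:ℝ) ≤ 2), hρdef, hrpowk]
        congr 1; ring
      rw [e1]; exact e2.trans_eq e3
    calc s (ν+k) ^ ι ≤ (s ν * s ν ^ ((k:ℝ)/2)) ^ ι := h1
    _ = s ν ^ ι * (s ν ^ ((k:ℝ)/2)) ^ ι := h2
    _ ≤ s ν ^ ι * ρ ^ k :=
        mul_le_mul_of_nonneg_left h3 (Real.rpow_nonneg (hspos _).le _)
  have htail : ∀ ν : ℕ, 1 ≤ ν → (Summable fun k => s (ν+k) ^ ι) ∧
      (∑' k, s (ν+k) ^ ι) ≤ s ν ^ ι * (2/ι) := by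
    intro ν hν
    have hg : Summable fun k : ℕ => s ν ^ ι * ρ ^ k :=
      (summable_geometric_of_lt_one hρ0 hρ1).mul_left _
    have hsum : Summable fun k => s (ν+k) ^ ι :=
      Summable.of_nonneg_of_le (fun k => Real.rpow_nonneg (hspos _).le _)
        (fun k => hterm ν k hν) hg
    refine ⟨hsum, ?_⟩
    calc (∑' k, s (ν+k) ^ ι) ≤ ∑' k, s ν ^ ι * ρ ^ k :=
      Summable.tsum_le_tsum (fun k => hterm ν k hν) hsum hg
    _ = s ν ^ ι * (1 - ρ)⁻¹ := by rw [tsum_mul_left, tsum_geometric_of_lt_one hρ0 hρ1]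
    _ ≤ s ν ^ ι * (2/ι) := by
        apply mul_le_mul_of_nonneg_left _ (Real.rpow_nonneg (hspos _).le _)
        have h1 : 0 < 1 - ρ := by linarith
        rw [← one_div, div_le_div_iff₀ h1 hι0]
        linarith
  -- the differences
  set d : ℕ → (Fin n → ℂ) → X := fun i z => f (i+1) z - f i z with hddef
  have hstrip_sub : ∀ i : ℕ,
      {z : Fin n → ℂ | ∀ j, |(z j).im| < s (i+1)} ⊆ {z | ∀ j, |(z j).im| < s i} :=
    fun i z hz j => (hz j).trans_le (hsmono (Nat.le_succ i))
  have hdholo : ∀ i, DifferentiableOn ℂ (d i) {z : Fin n → ℂ | ∀ j, |(z j).im| < s (i+1)} := by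
    intro i
    have h1 : DifferentiableOn ℂ (f (i+1)) {z : Fin n → ℂ | ∀ j, |(z j).im| < s (i+1)} :=
      hol (i+1) (Nat.le_add_left 1 i)
    have h2 : DifferentiableOn ℂ (f i) {z : Fin n → ℂ | ∀ j, |(z j).im| < s (i+1)} := by
      rcases Nat.eq_zero_or_pos i with h | h
      · subst h; rw [hf0]; exact (differentiable_const (0:X)).differentiableOn
      · exact (hol i h).mono (hstrip_sub i)
    exact h1.sub h2
  have hdbd : ∀ i, ∀ z : Fin n → ℂ, (∀ j, |(z j).im| < s (i+1)) → ‖d i z‖ ≤ c * s (i+1) ^ ι := by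
    intro i z hz
    have := hbd (i+1) (Nat.le_add_left 1 i) z hz
    simpa using this
  have hdreal : ∀ i (x : EuclideanSpace ℝ (Fin n)),
      ‖d i (fun j => (x j : ℂ))‖ ≤ c * s (i+1) ^ ι := by
    intro i x
    exact hdbd i _ (fun j => by simpa using hspos (i+1))
  have hcs' : Summable fun i : ℕ => c * s (i+1) ^ ι := by
    have := ((htail 1 le_rfl).1.mul_left c)
    simpa [add_comm] using this
  have hSnd : ∀ x : EuclideanSpace ℝ (Fin n), Summable fun i => ‖d i (fun j => (x j : ℂ))‖ :=
    fun x => Summable.of_nonneg_of_le (fun i => norm_nonneg _) (fun i => hdreal i x) hcs'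
  have hSd : ∀ x : EuclideanSpace ℝ (Fin n), Summable fun i => d i (fun j => (x j : ℂ)) :=
    fun x => Summable.of_norm (hSnd x)
  refine ⟨fun x => ∑' i, d i (fun j => (x j : ℂ)), ?_, ?_, ?_⟩
  · -- convergence
    intro x
    have h1 := (hSd x).hasSum.tendsto_sum_nat
    refine h1.congr fun ν => ?_
    rw [hddef]
    rw [Finset.sum_range_sub (fun i => f i (fun j => (x j : ℂ)))]
    simp [hf0]
  · -- sup bound
    intro x
    have hs1σ : s 1 ^ ι ≤ σ ^ ι := by
      have hs1 : s 1 ≤ σ := by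
        have h2 : s 1 = σ ^ ((3:ℝ)/2) := by simp only [hsdef, pow_one]
        have h3 : σ ^ ((3:ℝ)/2) ≤ σ ^ (1:ℝ) := hmonoexp (by norm_num)
        rw [h2]; rw [Real.rpow_one] at h3; exact h3
      exact Real.rpow_le_rpow (hspos 1).le hs1 hι0.le
    calc ‖∑' i, d i (fun j => (x j : ℂ))‖ ≤ ∑' i, ‖d i (fun j => (x j : ℂ))‖ :=
      norm_tsum_le_tsum_norm (hSnd x)
    _ ≤ ∑' i, c * s (i+1) ^ ι := Summable.tsum_le_tsum (fun i => hdreal i x) (hSnd x) hcs'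
    _ = c * ∑' i, s (1+i) ^ ι := by
        rw [← tsum_mul_left]
        exact tsum_congr fun i => by rw [add_comm i 1]
    _ ≤ c * (s 1 ^ ι * (2/ι)) := mul_le_mul_of_nonneg_left (htail 1 le_rfl).2 hc.le
    _ ≤ c * (σ ^ ι * (2/ι)) := by
        apply mul_le_mul_of_nonneg_left _ hc.le
        apply mul_le_mul_of_nonneg_right hs1σ (by positivity)
    _ = 2 * c / ι * σ ^ ι := by ring
  · -- Hölder bound
    intro x y hxy hdist1
    set t := dist x y with htdef
    have ht0 : 0 < t := dist_pos.2 hxy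
    set u : EuclideanSpace ℝ (Fin n) := y - x with hu
    have hut : ‖u‖ = t := by rw [hu, ← dist_eq_norm, dist_comm]
    have hcoord : ∀ j, |u j| ≤ t := by
      intro j
      rw [← hut]
      calc |u j| = Real.sqrt (‖u j‖ ^ 2) := by
            rw [Real.sqrt_sq_eq_abs, Real.norm_eq_abs, abs_abs]
      _ ≤ Real.sqrt (∑ i, ‖u i‖ ^ 2) := Real.sqrt_le_sqrt
            (Finset.single_le_sum (f := fun i => ‖u i‖^2) (fun i _ => sq_nonneg _) (Finset.mem_univ j))
      _ = ‖u‖ := (EuclideanSpace.norm_eq u).symm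
    -- per-index Lipschitz estimate
    have hlip : ∀ i : ℕ, ‖d i (fun j => (x j : ℂ)) - d i (fun j => (y j : ℂ))‖ ≤
        2 * c * t * s (i+1) ^ (ι - 1) := by
      intro i
      set r : ℝ := s (i+1) / t with hrdef
      have hrpos : 0 < r := div_pos (hspos _) ht0
      set A : ℂ → (Fin n → ℂ) := fun w j => (x j : ℂ) + w * (u j : ℂ) with hA
      have hAmaps : ∀ w : ℂ, |w.im| < r → ∀ j, |((A w) j).im| < s (i+1) := by
        intro w hw j
        have him : ((x j : ℂ) + w * ((u j : ℝ) : ℂ)).im = w.im * u j := by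
          simp [Complex.add_im, Complex.mul_im]
        show |((x j : ℂ) + w * ((u j : ℝ):ℂ)).im| < s (i+1)
        rw [him]
        calc |w.im * u j| = |w.im| * |u j| := abs_mul _ _
        _ ≤ |w.im| * t := mul_le_mul_of_nonneg_left (hcoord j) (abs_nonneg _)
        _ < r * t := mul_lt_mul_of_pos_right hw ht0
        _ = s (i+1) := by rw [hrdef]; field_simp
      have hAdiff : Differentiable ℂ A := by
        rw [hA]
        apply differentiable_pi.mpr
        intro j
        exact (differentiable_const _).add (differentiable_id.mul (differentiable_const _))
      have hhd : DifferentiableOn ℂ (fun w => d i (A w)) {w : ℂ | |w.im| < r} := by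
        apply (hdholo i).comp hAdiff.differentiableOn
        intro w hw
        exact hAmaps w hw
      have hhb : ∀ w : ℂ, |w.im| < r → ‖d i (A w)‖ ≤ c * s (i+1) ^ ι := fun w hw =>
        hdbd i _ (hAmaps w hw)
      have hkey := strip_lipschitz hrpos hhd hhb 0 1
      have hA0 : A 0 = (fun j => ((x j : ℝ) : ℂ)) := by
        funext j; simp [hA]
      have hA1 : A 1 = (fun j => ((y j : ℝ) : ℂ)) := by
        funext j
        have huj : u j = y j - x j := rfl
        simp only [hA, one_mul, huj]
        push_cast; ring
      simp only [Complex.ofReal_zero, Complex.ofReal_one] at hkey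
      rw [hA0, hA1] at hkey
      calc ‖d i (fun j => (x j : ℂ)) - d i (fun j => (y j : ℂ))‖
          ≤ 2 * (c * s (i+1) ^ ι) / r * |(0:ℝ) - 1| := hkey
      _ = 2 * c * t * (s (i+1) ^ ι / s (i+1)) := by
          rw [hrdef]
          rw [show |(0:ℝ) - 1| = 1 by norm_num]
          field_simp
      _ = 2 * c * t * s (i+1) ^ (ι - 1) := by
          rw [Real.rpow_sub (hspos _), Real.rpow_one]
    have hlip2 : ∀ i : ℕ, ‖d i (fun j => (x j : ℂ)) - d i (fun j => (y j : ℂ))‖ ≤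
        2 * (c * s (i+1) ^ ι) := by
      intro i
      calc ‖d i (fun j => (x j : ℂ)) - d i (fun j => (y j : ℂ))‖
          ≤ ‖d i (fun j => (x j : ℂ))‖ + ‖d i (fun j => (y j : ℂ))‖ := norm_sub_le _ _
      _ ≤ 2 * (c * s (i+1) ^ ι) := by
          have := hdreal i x; have := hdreal i y; linarith
    -- choose N
    have hex : ∃ m : ℕ, s (m+1) < t := by
      have hhalf : ∀ m : ℕ, s (m+1) ≤ (1/2:ℝ)^(m+1) := by
        intro m
        have h1 : ((m+1:ℕ):ℝ)/2 ≤ (3/2:ℝ)^(m+1) := by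
          have := hexp 1 m
          rw [show 1 + m = m + 1 by omega] at this
          push_cast at this ⊢
          nlinarith [hpow32 (m+1)]
        calc s (m+1) ≤ σ ^ (((m+1:ℕ):ℝ)/2) := hmonoexp h1
        _ ≤ ((1:ℝ)/4) ^ (((m+1:ℕ):ℝ)/2) :=
            Real.rpow_le_rpow hσ0.le hσ (by positivity)
        _ = (1/2:ℝ)^(m+1) := by
            have h2 : ((1:ℝ)/4) = (1/2:ℝ)^(2:ℝ) := by
              have := Real.rpow_natCast (1/2:ℝ) 2
              norm_num at this; linarith
            rw [h2, ← Real.rpow_mul (by norm_num : (0:ℝ) ≤ 1/2),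
              show (2:ℝ) * (((m+1:ℕ):ℝ)/2) = ((m+1:ℕ):ℝ) by ring, Real.rpow_natCast]
      obtain ⟨m, hm⟩ := exists_pow_lt_of_lt_one ht0 (by norm_num : (1/2:ℝ) < 1)
      refine ⟨m, (hhalf m).trans_lt (lt_of_le_of_lt ?_ hm)⟩
      exact pow_le_pow_of_le_one (by norm_num) (by norm_num) (Nat.le_succ m)
    obtain ⟨N, hN1, hN2⟩ : ∃ N : ℕ, s (N+1) < t ∧ ∀ m, m < N → t ≤ s (m+1) := by
      classical
      exact ⟨Nat.find hex, Nat.find_spec hex, fun m hm => le_of_not_gt (Nat.find_min hex hm)⟩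
    -- head estimate
    have hhead : ∑ i ∈ Finset.range N, s (i+1) ^ (ι-1) ≤ t ^ (ι-1) * (2/(1-ι)) := by
      rcases Nat.eq_zero_or_pos N with h | hNpos
      · subst h; simp only [Finset.range_zero, Finset.sum_empty]
        have h1ι : (0:ℝ) < 1-ι := by linarith
        positivity
      · have hsN : t ≤ s N := by
          have := hN2 (N-1) (by omega)
          rwa [show N - 1 + 1 = N by omega] at this
        have hterm' : ∀ i ∈ Finset.range N, s (i+1) ^ (ι-1) ≤ s N ^ (ι-1) * q ^ (N-1-i) := by
          intro i hi
          rw [Finset.mem_range] at hi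
          set k : ℕ := N - 1 - i with hk
          have hNk : N = (i+1) + k := by omega
          have h1 : s N ≤ s (i+1) * s (i+1) ^ ((k:ℝ)/2) := by
            rw [hNk]; exact hsk (i+1) k
          have h2 : s (i+1) ^ ((k:ℝ)/2) ≤ ((2:ℝ)^(-3:ℝ)) ^ ((k:ℝ)/2) :=
            Real.rpow_le_rpow (hspos _).le (h18 (i+1) (Nat.le_add_left 1 i)) (by positivity)
          have h3 : s N ≤ s (i+1) * (2:ℝ) ^ ((-3) * ((k:ℝ)/2)) := by
            rw [Real.rpow_mul (by norm_num : (0:ℝ) ≤ 2)]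
            exact h1.trans (mul_le_mul_of_nonneg_left h2 (hspos _).le)
          have h4 : (s (i+1) * (2:ℝ)^((-3) * ((k:ℝ)/2))) ^ (ι-1) ≤ s N ^ (ι-1) :=
            Real.rpow_le_rpow_of_nonpos (hspos N) h3 (by linarith)
          have h5 : (s (i+1) * (2:ℝ)^((-3) * ((k:ℝ)/2))) ^ (ι-1)
              = s (i+1) ^ (ι-1) * (2:ℝ)^((-3) * ((k:ℝ)/2) * (ι-1)) := by
            rw [Real.mul_rpow (hspos _).le (Real.rpow_pos_of_pos two_pos _).le,
              ← Real.rpow_mul (by norm_num : (0:ℝ) ≤ 2)]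
          have hE : (0:ℝ) < (2:ℝ)^((-3) * ((k:ℝ)/2) * (ι-1)) := Real.rpow_pos_of_pos two_pos _
          have h6 : s (i+1) ^ (ι-1) ≤ s N ^ (ι-1) / (2:ℝ)^((-3) * ((k:ℝ)/2) * (ι-1)) := by
            rw [le_div_iff₀ hE]
            rw [h5] at h4
            exact h4
          have h7 : s N ^ (ι-1) / (2:ℝ)^((-3) * ((k:ℝ)/2) * (ι-1)) = s N ^ (ι-1) * q ^ k := by
            rw [div_eq_mul_inv]
            congr 1
            rw [hqdef, hrpowk, ← Real.rpow_neg (by norm_num : (0:ℝ) ≤ 2)]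
            congr 1; ring
          exact h6.trans_eq h7
        calc ∑ i ∈ Finset.range N, s (i+1) ^ (ι-1)
            ≤ ∑ i ∈ Finset.range N, s N ^ (ι-1) * q ^ (N-1-i) := Finset.sum_le_sum hterm'
        _ = s N ^ (ι-1) * ∑ i ∈ Finset.range N, q ^ (N-1-i) := by rw [← Finset.mul_sum]
        _ = s N ^ (ι-1) * ∑ m ∈ Finset.range N, q ^ m := by
            rw [Finset.sum_range_reflect (fun m => q ^ m) N]
        _ ≤ s N ^ (ι-1) * (1-q)⁻¹ := by
            apply mul_le_mul_of_nonneg_left _ (Real.rpow_nonneg (hspos N).le _)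
            have hsum := Summable.sum_le_tsum (Finset.range N) (fun i _ => pow_nonneg hq0 i)
              (summable_geometric_of_lt_one hq0 hq1)
            rwa [tsum_geometric_of_lt_one hq0 hq1] at hsum
        _ ≤ t ^ (ι-1) * (2/(1-ι)) := by
            have e1 : s N ^ (ι-1) ≤ t ^ (ι-1) :=
              Real.rpow_le_rpow_of_nonpos ht0 hsN (by linarith)
            have h1q : 0 < 1 - q := by linarith
            have e2 : (1-q)⁻¹ ≤ 2/(1-ι) := by
              rw [← one_div, div_le_div_iff₀ h1q (by linarith)]
              linarith
            exact mul_le_mul e1 e2 (inv_nonneg.mpr h1q.le) (Real.rpow_nonneg ht0.le _)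
    -- tail estimate
    set F : ℕ → ℝ := fun i => ‖d i (fun j => (x j : ℂ)) - d i (fun j => (y j : ℂ))‖ with hF
    have hSF : Summable F :=
      Summable.of_nonneg_of_le (fun i => norm_nonneg _) hlip2 (hcs'.mul_left 2)
    have htailS := htail (N+1) (Nat.le_add_left 1 N)
    have htail2 : ∑' i, F (i + N) ≤ 2 * c * (t ^ ι * (2/ι)) := by
      have hb2 : ∀ i : ℕ, F (i + N) ≤ 2 * c * s ((N+1) + i) ^ ι := by
        intro i
        have h0 := hlip2 (i + N)
        rw [show (i + N) + 1 = (N+1) + i by omega] at h0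
        calc F (i + N) ≤ 2 * (c * s ((N+1)+i) ^ ι) := h0
        _ = 2 * c * s ((N+1)+i) ^ ι := by ring
      have hS1 : Summable fun i => F (i + N) := (summable_nat_add_iff N).mpr hSF
      have hS2 : Summable fun i => 2 * c * s ((N+1) + i) ^ ι := by
        have := htailS.1.mul_left (2*c)
        simpa [mul_assoc] using this
      calc ∑' i, F (i+N) ≤ ∑' i, 2 * c * s ((N+1)+i) ^ ι := Summable.tsum_le_tsum hb2 hS1 hS2
      _ = 2 * c * ∑' i, s ((N+1)+i) ^ ι := by rw [tsum_mul_left]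
      _ ≤ 2 * c * (s (N+1) ^ ι * (2/ι)) :=
          mul_le_mul_of_nonneg_left htailS.2 (by positivity)
      _ ≤ 2 * c * (t ^ ι * (2/ι)) := by
          have e1 : s (N+1) ^ ι ≤ t ^ ι := Real.rpow_le_rpow (hspos _).le hN1.le hι0.le
          have e2 : (0:ℝ) ≤ 2/ι := by positivity
          apply mul_le_mul_of_nonneg_left _ (by positivity : (0:ℝ) ≤ 2*c)
          exact mul_le_mul_of_nonneg_right e1 e2
    have hhead2 : ∑ i ∈ Finset.range N, F i ≤ 2 * c * t * (t ^ (ι-1) * (2/(1-ι))) := by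
      calc ∑ i ∈ Finset.range N, F i
          ≤ ∑ i ∈ Finset.range N, 2*c*t*s (i+1)^(ι-1) :=
            Finset.sum_le_sum (fun i _ => hlip i)
      _ = 2*c*t * ∑ i ∈ Finset.range N, s (i+1)^(ι-1) := by rw [← Finset.mul_sum]
      _ ≤ 2*c*t * (t^(ι-1) * (2/(1-ι))) :=
            mul_le_mul_of_nonneg_left hhead (by positivity)
    have hgd : (∑' i, d i (fun j => (x j : ℂ))) - ∑' i, d i (fun j => (y j : ℂ))
        = ∑' i, (d i (fun j => (x j : ℂ)) - d i (fun j => (y j : ℂ))) :=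
      (Summable.tsum_sub (hSd x) (hSd y)).symm
    have htt : t * t^(ι-1) = t^ι := by
      have h0 := (Real.rpow_add ht0 1 (ι-1)).symm
      rw [Real.rpow_one] at h0
      rw [show (1:ℝ) + (ι-1) = ι by ring] at h0
      exact h0
    calc ‖(∑' i, d i (fun j => (x j : ℂ))) - ∑' i, d i (fun j => (y j : ℂ))‖
        = ‖∑' i, (d i (fun j => (x j : ℂ)) - d i (fun j => (y j : ℂ)))‖ := by rw [hgd]
    _ ≤ ∑' i, F i := norm_tsum_le_tsum_norm hSF
    _ = ∑ i ∈ Finset.range N, F i + ∑' i, F (i+N) := (Summable.sum_add_tsum_nat_add N hSF).symm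
    _ ≤ 2*c*t*(t^(ι-1)*(2/(1-ι))) + 2*c*(t^ι*(2/ι)) := add_le_add hhead2 htail2
    _ = 4*c/(ι*(1-ι)) * t ^ ι := by
        have hιne : ι ≠ 0 := hι0.ne'
        have h1ιne : (1:ℝ) - ι ≠ 0 := ne_of_gt (by linarith)
        rw [show 2*c*t*(t^(ι-1)*(2/(1-ι))) = 4*c*(t*t^(ι-1))/(1-ι) by ring, htt]
        field_simp
        ring
end

section
/- Let d ≥ 1 be an integer, and let α > 0, γ₁ > 0, γ₂ > 0, δ with 0 < δ < γ₂/24, and β > 9(2 + d/α)γ₁/(γ₂ − 24δ) be real numbers. For 0 < ε < 1 define ε_ν = ε^{(3/2)^ν}, K_ν = 8·ln(1/ε_ν)·ε_ν^{−3/(2β)}, and κ_ν = ε_ν^{1/(6(2+d/α))}. Then there exists ε* ∈ (0,1), depending only on d, α, γ₁, γ₂, δ and β, such that for all 0 < ε < ε*, ∑_{ν=0}^{∞} K_ν^{γ₁}·κ_ν^{γ₂} ≤ ε^{3δ/(2+d/α)}. -/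
open Real Filter

/-- Core per-term estimate. -/
lemma statement8_aux (c' dA L γ₁ : ℝ) (hγ₁ : 0 < γ₁) (hL : 0 < L) (hdA : 0 ≤ dA)
    (hc' : 0 < c')
    (h1 : 8 ^ γ₁ * L ^ γ₁ * Real.exp (-(c' * L)) ≤ 1 / 2)
    (h2 : γ₁ * Real.log (3 / 2) + Real.log 2 ≤ c' * L / 2) (ν : ℕ) :
    8 ^ γ₁ * (((3 / 2 : ℝ) ^ ν) * L) ^ γ₁ *
      Real.exp (-((c' + 3 * dA) * (((3 / 2 : ℝ) ^ ν) * L))) ≤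
    Real.exp (-(3 * dA * L)) / 2 * (1 / 2) ^ ν := by
  set t : ℝ := (3 / 2 : ℝ) ^ ν with htdef
  have ht0 : 0 < t := by positivity
  have ht1 : (1 : ℝ) ≤ t := one_le_pow₀ (by norm_num)
  have ht2 : 1 + (ν : ℝ) / 2 ≤ t := by
    have := one_add_mul_le_pow (a := (1/2 : ℝ)) (by norm_num) ν
    have h32 : ((1:ℝ) + 1/2) = 3/2 := by norm_num
    rw [h32] at this
    calc 1 + (ν : ℝ) / 2 = 1 + (ν : ℝ) * (1/2) := by ring
    _ ≤ t := this
  have hexp : ∀ a b : ℝ, Real.exp a ^ b = Real.exp (a * b) := fun a b => by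
    rw [← Real.exp_mul]
  -- rewrite (t*L)^γ₁
  have htL : (t * L) ^ γ₁ = Real.exp ((ν : ℝ) * Real.log (3/2) * γ₁) * L ^ γ₁ := by
    rw [Real.mul_rpow ht0.le hL.le]
    congr 1
    rw [Real.rpow_def_of_pos ht0, htdef, Real.log_pow]
  calc 8 ^ γ₁ * (t * L) ^ γ₁ * Real.exp (-((c' + 3 * dA) * (t * L)))
      = (8 ^ γ₁ * L ^ γ₁ * Real.exp (-(c' * L))) *
          Real.exp ((ν : ℝ) * Real.log (3/2) * γ₁ - c' * (t - 1) * L) *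
          Real.exp (-(3 * dA * (t * L))) := by
        rw [htL]
        have key : Real.exp ((ν : ℝ) * Real.log (3/2) * γ₁) *
            Real.exp (-((c' + 3 * dA) * (t * L))) =
            Real.exp (-(c' * L)) *
            Real.exp ((ν : ℝ) * Real.log (3/2) * γ₁ - c' * (t - 1) * L) *
            Real.exp (-(3 * dA * (t * L))) := by
          rw [← Real.exp_add, ← Real.exp_add, ← Real.exp_add]
          congr 1
          ring
        linear_combination (8 ^ γ₁ * L ^ γ₁) * key
    _ ≤ (1 / 2) * Real.exp ((ν : ℝ) * (-Real.log 2)) * Real.exp (-(3 * dA * L)) := by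
        have hA0 : (0:ℝ) ≤ 8 ^ γ₁ * L ^ γ₁ * Real.exp (-(c' * L)) := by positivity
        have e1 : Real.exp ((ν : ℝ) * Real.log (3/2) * γ₁ - c' * (t - 1) * L)
            ≤ Real.exp ((ν : ℝ) * (-Real.log 2)) := by
          apply Real.exp_le_exp.mpr
          have hcl : 0 ≤ c' * L := (mul_pos hc' hL).le
          have step : c' * ((ν : ℝ)/2) * L ≤ c' * (t - 1) * L := by
            have : (ν : ℝ)/2 ≤ t - 1 := by linarith
            nlinarith
          have step2 : (ν : ℝ) * Real.log (3/2) * γ₁ - c' * ((ν : ℝ)/2) * L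
              ≤ (ν : ℝ) * (-Real.log 2) := by
            have hν : (0:ℝ) ≤ (ν : ℝ) := Nat.cast_nonneg ν
            nlinarith [mul_le_mul_of_nonneg_left h2 hν]
          linarith
        have e2 : Real.exp (-(3 * dA * (t * L))) ≤ Real.exp (-(3 * dA * L)) := by
          apply Real.exp_le_exp.mpr
          have h' := mul_le_mul_of_nonneg_left ht1 (mul_nonneg hdA hL.le)
          nlinarith [h']
        gcongr
    _ = Real.exp (-(3 * dA * L)) / 2 * (1 / 2) ^ ν := by
        rw [Real.exp_nat_mul, Real.exp_neg, Real.exp_log (by norm_num : (0:ℝ) < 2)]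
        ring



/-- (Measure estimate of Section 4.5.) With `ε_ν = ε^{(3/2)^ν}`,
`K_ν = 8 ln(1/ε_ν) ε_ν^{−3/(2β)}` and `κ_ν = ε_ν^{1/(6(2+d/α))}`, if
`β > 9(2+d/α)γ₁/(γ₂−24δ)` with `0 < δ < γ₂/24`, then there is `ε* ∈ (0,1)`, depending only
on `d, α, γ₁, γ₂, δ, β`, such that `∑_{ν≥0} K_ν^{γ₁} κ_ν^{γ₂} ≤ ε^{3δ/(2+d/α)}` for all
`0 < ε < ε*`. -/
theorem statement8 (d : ℕ) (hd : 1 ≤ d) (α γ₁ γ₂ δ β : ℝ)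
    (hα : 0 < α) (hγ₁ : 0 < γ₁) (hγ₂ : 0 < γ₂) (hδ0 : 0 < δ) (hδ : δ < γ₂ / 24)
    (hβ : 9 * (2 + (d : ℝ) / α) * γ₁ / (γ₂ - 24 * δ) < β) :
    ∃ εs : ℝ, 0 < εs ∧ εs < 1 ∧
      ∀ ε : ℝ, 0 < ε → ε < εs →
        Summable (fun ν : ℕ =>
          (8 * Real.log (1 / ε ^ ((3 / 2 : ℝ) ^ ν)) *
              (ε ^ ((3 / 2 : ℝ) ^ ν)) ^ (-(3 / (2 * β)))) ^ γ₁ *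
          ((ε ^ ((3 / 2 : ℝ) ^ ν)) ^ ((1 : ℝ) / (6 * (2 + (d : ℝ) / α)))) ^ γ₂) ∧
        ∑' ν : ℕ,
          (8 * Real.log (1 / ε ^ ((3 / 2 : ℝ) ^ ν)) *
              (ε ^ ((3 / 2 : ℝ) ^ ν)) ^ (-(3 / (2 * β)))) ^ γ₁ *
          ((ε ^ ((3 / 2 : ℝ) ^ ν)) ^ ((1 : ℝ) / (6 * (2 + (d : ℝ) / α)))) ^ γ₂ ≤
          ε ^ (3 * δ / (2 + (d : ℝ) / α)) := by
  have hdα : 0 ≤ (d : ℝ) / α := by positivity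
  set A : ℝ := 2 + (d : ℝ) / α with hAdef
  have hA0 : 0 < A := by rw [hAdef]; linarith
  have hAne : A ≠ 0 := hA0.ne'
  have hγδ : 0 < γ₂ - 24 * δ := by linarith
  have hβ' : 9 * A * γ₁ < β * (γ₂ - 24 * δ) := by
    rw [div_lt_iff₀ hγδ] at hβ; linarith
  have hβ0 : 0 < β := by
    nlinarith [mul_pos (mul_pos (show (0:ℝ) < 9 by norm_num) hA0) hγ₁]
  set c' : ℝ := γ₂ / (6 * A) - 3 * γ₁ / (2 * β) - 3 * (δ / A) with hc'def
  have hc'pos : 0 < c' := by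
    have h1 : 3 * γ₁ / (2 * β) < (γ₂ - 24 * δ) / (6 * A) := by
      rw [div_lt_div_iff₀ (by positivity) (by positivity)]
      nlinarith
    have h3 : (γ₂ - 24 * δ) / (6 * A) = γ₂ / (6 * A) - 4 * (δ / A) := by
      field_simp
      ring
    have hδA : 0 < δ / A := div_pos hδ0 hA0
    rw [h3] at h1
    rw [hc'def]
    linarith
  have hlim : Tendsto (fun L : ℝ => 8 ^ γ₁ * (L ^ γ₁ * Real.exp (-(c' * L))))
      atTop (nhds 0) := by
    have h := (tendsto_rpow_mul_exp_neg_mul_atTop_nhds_zero γ₁ c' hc'pos).const_mul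
      ((8:ℝ) ^ γ₁)
    simpa [neg_mul] using h
  obtain ⟨L₀, hL₀⟩ := eventually_atTop.mp (hlim.eventually_lt_const (by norm_num : (0:ℝ) < 1/2))
  set Lm : ℝ := max (max L₀ (2 * (γ₁ * Real.log (3/2) + Real.log 2) / c')) 1 with hLm
  have hLm1 : (1:ℝ) ≤ Lm := le_max_right _ _
  refine ⟨Real.exp (-Lm), Real.exp_pos _, ?_, ?_⟩
  · calc Real.exp (-Lm) < Real.exp 0 := Real.exp_lt_exp.mpr (by linarith)
    _ = 1 := Real.exp_zero
  intro ε hε hεs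
  set L : ℝ := -Real.log ε with hLdef
  have hLgt : Lm < L := by
    have h := Real.log_lt_log hε hεs
    rw [Real.log_exp] at h
    rw [hLdef]
    linarith
  have hLpos : 0 < L := by linarith
  have hcond1 : 8 ^ γ₁ * L ^ γ₁ * Real.exp (-(c' * L)) ≤ 1 / 2 := by
    have h := hL₀ L (le_trans (le_trans (le_max_left _ _) (le_max_left _ _)) hLgt.le)
    rw [mul_assoc]
    exact h.le
  have hcond2 : γ₁ * Real.log (3/2) + Real.log 2 ≤ c' * L / 2 := by
    have hx : 2 * (γ₁ * Real.log (3/2) + Real.log 2) / c' ≤ L :=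
      le_trans (le_trans (le_max_right _ _) (le_max_left _ _)) hLgt.le
    rw [div_le_iff₀ hc'pos] at hx
    linarith
  have hterm : ∀ ν : ℕ,
      (8 * Real.log (1 / ε ^ ((3 / 2 : ℝ) ^ ν)) *
          (ε ^ ((3 / 2 : ℝ) ^ ν)) ^ (-(3 / (2 * β)))) ^ γ₁ *
        ((ε ^ ((3 / 2 : ℝ) ^ ν)) ^ ((1 : ℝ) / (6 * A))) ^ γ₂
      = 8 ^ γ₁ * (((3 / 2 : ℝ) ^ ν) * L) ^ γ₁ *
          Real.exp (-((c' + 3 * (δ / A)) * (((3 / 2 : ℝ) ^ ν) * L))) := by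
    intro ν
    have ht0 : (0:ℝ) < (3/2 : ℝ) ^ ν := by positivity
    have hlog1 : Real.log (1 / ε ^ ((3/2 : ℝ) ^ ν)) = ((3/2 : ℝ) ^ ν) * L := by
      rw [one_div, Real.log_inv, Real.log_rpow hε, hLdef]
      ring
    have hpow : ∀ s : ℝ, (ε ^ ((3/2 : ℝ) ^ ν)) ^ s
        = Real.exp (-(((3/2 : ℝ) ^ ν) * L) * s) := by
      intro s
      rw [Real.rpow_def_of_pos (Real.rpow_pos_of_pos hε _), Real.log_rpow hε, hLdef]
      congr 1
      ring
    rw [hlog1, hpow, hpow,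
        Real.mul_rpow (by positivity) (Real.exp_pos _).le,
        Real.mul_rpow (by norm_num : (0:ℝ) ≤ 8) (by positivity),
        ← Real.exp_mul, ← Real.exp_mul]
    have key : Real.exp (-(((3/2 : ℝ) ^ ν) * L) * -(3 / (2 * β)) * γ₁) *
        Real.exp (-(((3/2 : ℝ) ^ ν) * L) * (1 / (6 * A)) * γ₂)
        = Real.exp (-((c' + 3 * (δ / A)) * (((3/2 : ℝ) ^ ν) * L))) := by
      rw [← Real.exp_add, hc'def]
      congr 1
      ring
    linear_combination (8 ^ γ₁ * (((3/2 : ℝ) ^ ν) * L) ^ γ₁) * key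
  have hdA0 : (0:ℝ) ≤ δ / A := (div_pos hδ0 hA0).le
  have hbound : ∀ ν : ℕ,
      (8 * Real.log (1 / ε ^ ((3 / 2 : ℝ) ^ ν)) *
          (ε ^ ((3 / 2 : ℝ) ^ ν)) ^ (-(3 / (2 * β)))) ^ γ₁ *
        ((ε ^ ((3 / 2 : ℝ) ^ ν)) ^ ((1 : ℝ) / (6 * A))) ^ γ₂
      ≤ Real.exp (-(3 * (δ / A) * L)) / 2 * (1/2 : ℝ) ^ ν := by
    intro ν
    rw [hterm ν]
    exact statement8_aux c' (δ / A) L γ₁ hγ₁ hLpos hdA0 hc'pos hcond1 hcond2 ν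
  have hnonneg : ∀ ν : ℕ, 0 ≤
      (8 * Real.log (1 / ε ^ ((3 / 2 : ℝ) ^ ν)) *
          (ε ^ ((3 / 2 : ℝ) ^ ν)) ^ (-(3 / (2 * β)))) ^ γ₁ *
        ((ε ^ ((3 / 2 : ℝ) ^ ν)) ^ ((1 : ℝ) / (6 * A))) ^ γ₂ := by
    intro ν
    rw [hterm ν]
    positivity
  have hg : Summable (fun ν : ℕ => Real.exp (-(3 * (δ / A) * L)) / 2 * (1/2 : ℝ) ^ ν) :=
    summable_geometric_two.mul_left _
  have hf : Summable (fun ν : ℕ =>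
      (8 * Real.log (1 / ε ^ ((3 / 2 : ℝ) ^ ν)) *
          (ε ^ ((3 / 2 : ℝ) ^ ν)) ^ (-(3 / (2 * β)))) ^ γ₁ *
        ((ε ^ ((3 / 2 : ℝ) ^ ν)) ^ ((1 : ℝ) / (6 * A))) ^ γ₂) :=
    Summable.of_nonneg_of_le hnonneg hbound hg
  refine ⟨hf, ?_⟩
  have hM : Real.exp (-(3 * (δ / A) * L)) = ε ^ (3 * δ / A) := by
    rw [Real.rpow_def_of_pos hε, hLdef]
    congr 1
    ring
  calc ∑' ν : ℕ,
      (8 * Real.log (1 / ε ^ ((3 / 2 : ℝ) ^ ν)) *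
          (ε ^ ((3 / 2 : ℝ) ^ ν)) ^ (-(3 / (2 * β)))) ^ γ₁ *
        ((ε ^ ((3 / 2 : ℝ) ^ ν)) ^ ((1 : ℝ) / (6 * A))) ^ γ₂
      ≤ ∑' ν : ℕ, Real.exp (-(3 * (δ / A) * L)) / 2 * (1/2 : ℝ) ^ ν :=
        Summable.tsum_le_tsum hbound hf hg
    _ = Real.exp (-(3 * (δ / A) * L)) / 2 * 2 := by
        rw [tsum_mul_left, tsum_geometric_two]
    _ = ε ^ (3 * δ / A) := by rw [hM]; ring
end

section
/- For every real s ≥ 0 and every α with 0 < α ≤ 1, there exists a constant c(α,s,d) > 0 such that for all A ∈ M_{s,α} and B ∈ M⁺_{s,α}: (i) the series e^B − Id := ∑_{k=1}^{∞} B^k/k! converges in M⁺_{s,α} and |e^B − Id|_{s,α+} ≤ |B|_{s,α+}·exp(c(α,s,d)|B|_{s,α+}); (ii) the series A·e^B := A + ∑_{k=1}^{∞} A B^k/k! and e^B·A := A + ∑_{k=1}^{∞} B^k A/k! converge in M_{s,α}, and |A e^B|_{s,α} ≤ |A|_{s,α}·exp(c(α,s,d)|B|_{s,α+}) and |e^B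 A|_{s,α} ≤ |A|_{s,α}·exp(c(α,s,d)|B|_{s,α+}). Here matrix products are defined entrywise by (AB)_a^b = ∑_{c∈E} A_a^c B_c^b (the sums converging absolutely). -/
/-- The index set `E`: `d`-tuples of odd positive integers. -/
abbrev OddTuple (d : ℕ) : Type := {a : Fin d → ℕ // ∀ i, Odd (a i)}

/-- The weight `w_a = i₁ + ⋯ + i_d`. -/
def wE {d : ℕ} (a : OddTuple d) : ℕ := ∑ i, a.1 i

/-- Each block `[a] = {b ∈ E : w_b = w_a}` is finite. -/
noncomputable instance blockFintype (d N : ℕ) : Fintype {a : OddTuple d // wE a = N} := by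
  have key : ∀ a : {a : OddTuple d // wE a = N}, ∀ i, a.1.1 i < N + 1 := by
    intro a i
    have h1 : a.1.1 i ≤ ∑ j, a.1.1 j :=
      Finset.single_le_sum (fun j _ => Nat.zero_le _) (Finset.mem_univ i)
    have h2 : wE a.1 = N := a.2
    simp only [wE] at h2
    omega
  exact Fintype.ofInjective
    (fun a => (fun i => (⟨a.1.1 i, key a i⟩ : Fin (N + 1))))
    (by
      intro a b h
      apply Subtype.ext
      apply Subtype.ext
      funext i
      exact congrArg Fin.val (congrFun h i))

/-- The operator norm `‖A_{[a]}^{[b]}‖` of the restriction of the infinite matrix `A` to the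
block `[a] × [b]` (with `N = w_a`, `M = w_b`), between the Hermitian `ℓ²` spaces on the
blocks. -/
noncomputable def blockNorm {d : ℕ} (A : OddTuple d → OddTuple d → ℂ) (N M : ℕ) : ℝ :=
  ‖LinearMap.toContinuousLinearMap
    (Matrix.toEuclideanLin
      (Matrix.of fun (a : {a : OddTuple d // wE a = N}) (b : {b : OddTuple d // wE b = M}) =>
        A a.1 b.1))‖

/-- The weight `(w_a w_b)^α ((√(min(w_a,w_b)) + |w_a − w_b|)/√(min(w_a,w_b)))^{s/2}`
appearing in the norm of `M_{s,α}`. -/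
noncomputable def mwt (s α : ℝ) (N M : ℕ) : ℝ :=
  ((N : ℝ) * (M : ℝ)) ^ α *
    ((Real.sqrt (min (N : ℝ) (M : ℝ)) + |(N : ℝ) - (M : ℝ)|) /
      Real.sqrt (min (N : ℝ) (M : ℝ))) ^ (s / 2)

/-- The weight appearing in the norm of `M⁺_{s,α}` (extra factor `1 + |w_a − w_b|`). -/
noncomputable def mwtPlus (s α : ℝ) (N M : ℕ) : ℝ :=
  ((N : ℝ) * (M : ℝ)) ^ α * (1 + |(N : ℝ) - (M : ℝ)|) *
    ((Real.sqrt (min (N : ℝ) (M : ℝ)) + |(N : ℝ) - (M : ℝ)|) /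
      Real.sqrt (min (N : ℝ) (M : ℝ))) ^ (s / 2)

/-- `|A|_{s,α} ≤ C`, stated blockwise. -/
def MBound {d : ℕ} (s α : ℝ) (A : OddTuple d → OddTuple d → ℂ) (C : ℝ) : Prop :=
  ∀ a b : OddTuple d, mwt s α (wE a) (wE b) * blockNorm A (wE a) (wE b) ≤ C

/-- `|A|_{s,α+} ≤ C`, stated blockwise. -/
def MPBound {d : ℕ} (s α : ℝ) (A : OddTuple d → OddTuple d → ℂ) (C : ℝ) : Prop :=
  ∀ a b : OddTuple d, mwtPlus s α (wE a) (wE b) * blockNorm A (wE a) (wE b) ≤ C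

/-- Membership `A ∈ M_{s,α}`. -/
def MMem {d : ℕ} (s α : ℝ) (A : OddTuple d → OddTuple d → ℂ) : Prop := ∃ C, MBound s α A C

/-- Membership `A ∈ M⁺_{s,α}`. -/
def MPMem {d : ℕ} (s α : ℝ) (A : OddTuple d → OddTuple d → ℂ) : Prop := ∃ C, MPBound s α A C

/-- The norm `|A|_{s,α}`, realized as the least upper bound. -/
noncomputable def MNorm {d : ℕ} (s α : ℝ) (A : OddTuple d → OddTuple d → ℂ) : ℝ :=
  sInf {C | 0 ≤ C ∧ MBound s α A C}

/-- The norm `|A|_{s,α+}`, realized as the least upper bound. -/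
noncomputable def MPNorm {d : ℕ} (s α : ℝ) (A : OddTuple d → OddTuple d → ℂ) : ℝ :=
  sInf {C | 0 ≤ C ∧ MPBound s α A C}

/-- Entrywise matrix product `(AB)_a^b = ∑_{c∈E} A_a^c B_c^b` (a `tsum` over the countable
index set `E`). -/
noncomputable def matMul {d : ℕ} (A B : OddTuple d → OddTuple d → ℂ) :
    OddTuple d → OddTuple d → ℂ :=
  fun a b => ∑' c : OddTuple d, A a c * B c b

/-- Matrix powers `B^k` (with `B^0 = Id`). -/
noncomputable def matPow {d : ℕ} (B : OddTuple d → OddTuple d → ℂ) :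
    ℕ → OddTuple d → OddTuple d → ℂ
  | 0 => fun a b => if a = b then 1 else 0
  | k + 1 => matMul B (matPow B k)

/-- Convergence `T_m → S` of a sequence of matrices with respect to a given norm. -/
def MatTendsto {d : ℕ} (nrm : (OddTuple d → OddTuple d → ℂ) → ℝ)
    (T : ℕ → OddTuple d → OddTuple d → ℂ) (S : OddTuple d → OddTuple d → ℂ) : Prop :=
  Filter.Tendsto (fun m => nrm (T m - S)) Filter.atTop (nhds 0)

section Core

open scoped BigOperators

variable {d : ℕ}

abbrev Blk (d N : ℕ) := {a : OddTuple d // wE a = N}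
abbrev ES (d N : ℕ) := EuclideanSpace ℂ (Blk d N)

/-- The block matrix. -/
noncomputable def blkM (A : OddTuple d → OddTuple d → ℂ) (N M : ℕ) :
    Matrix (Blk d N) (Blk d M) ℂ :=
  Matrix.of fun a b => A a.1 b.1

/-- Matrices to continuous linear maps. -/
noncomputable def PhiE (d N M : ℕ) :
    Matrix (Blk d N) (Blk d M) ℂ ≃ₗ[ℂ] (ES d M →L[ℂ] ES d N) :=
  Matrix.toEuclideanLin.trans LinearMap.toContinuousLinearMap

lemma blockNorm_def (A : OddTuple d → OddTuple d → ℂ) (N M : ℕ) :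
    blockNorm A N M = ‖PhiE d N M (blkM A N M)‖ := rfl

lemma PhiE_apply (N M : ℕ) (X : Matrix (Blk d N) (Blk d M) ℂ) (v : ES d M) (a : Blk d N) :
    (PhiE d N M X v) a = ∑ c, X a c * v c := by
  simp [PhiE, Matrix.toEuclideanLin_apply, Matrix.mulVec, dotProduct]

lemma coord_le_norm {N : ℕ} (v : ES d N) (a : Blk d N) : ‖v a‖ ≤ ‖v‖ := by
  have h := EuclideanSpace.norm_eq v
  rw [h]
  have h1 : ‖v a‖ ^ 2 ≤ ∑ i, ‖v i‖ ^ 2 :=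
    Finset.single_le_sum (f := fun i => ‖v i‖ ^ 2) (fun i _ => sq_nonneg _) (Finset.mem_univ a)
  calc ‖v a‖ = Real.sqrt (‖v a‖ ^ 2) := by
        rw [Real.sqrt_sq (norm_nonneg _)]
    _ ≤ _ := Real.sqrt_le_sqrt h1

lemma apply_single (N M : ℕ) (X : Matrix (Blk d N) (Blk d M) ℂ) (b : Blk d M) (a : Blk d N) :
    (PhiE d N M X (EuclideanSpace.single b 1)) a = X a b := by
  rw [PhiE_apply]
  simp [EuclideanSpace.single_apply]

lemma norm_single_one {N : ℕ} (b : Blk d N) :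
    ‖(EuclideanSpace.single b 1 : ES d N)‖ = 1 := by
  rw [EuclideanSpace.norm_single]; norm_num

lemma entry_le_blockNorm (A : OddTuple d → OddTuple d → ℂ) {N M : ℕ}
    (a : Blk d N) (b : Blk d M) : ‖A a.1 b.1‖ ≤ blockNorm A N M := by
  have h1 : A a.1 b.1 = (PhiE d N M (blkM A N M) (EuclideanSpace.single b 1)) a := by
    rw [apply_single]; rfl
  rw [h1, blockNorm_def]
  calc ‖(PhiE d N M (blkM A N M) (EuclideanSpace.single b 1)) a‖
      ≤ ‖PhiE d N M (blkM A N M) (EuclideanSpace.single b 1)‖ := coord_le_norm _ _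
    _ ≤ ‖PhiE d N M (blkM A N M)‖ * ‖(EuclideanSpace.single b 1 : ES d M)‖ :=
        ContinuousLinearMap.le_opNorm _ _
    _ = ‖PhiE d N M (blkM A N M)‖ := by rw [norm_single_one, mul_one]

/-- column ℓ² bound -/
lemma col_sq_le (B : OddTuple d → OddTuple d → ℂ) {K M : ℕ} (b : Blk d M) :
    ∑ c : Blk d K, ‖B c.1 b.1‖ ^ 2 ≤ blockNorm B K M ^ 2 := by
  have h1 : ∀ c : Blk d K, (PhiE d K M (blkM B K M) (EuclideanSpace.single b 1)) c
      = B c.1 b.1 := fun c => apply_single K M _ b c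
  have h2 : ∑ c : Blk d K, ‖B c.1 b.1‖ ^ 2
      = ‖PhiE d K M (blkM B K M) (EuclideanSpace.single b 1)‖ ^ 2 := by
    rw [EuclideanSpace.norm_eq, Real.sq_sqrt (Finset.sum_nonneg fun i _ => sq_nonneg _)]
    exact Finset.sum_congr rfl fun c _ => by rw [h1]
  rw [h2]
  have h3 : ‖PhiE d K M (blkM B K M) (EuclideanSpace.single b 1)‖ ≤ blockNorm B K M := by
    rw [blockNorm_def]
    calc _ ≤ ‖PhiE d K M (blkM B K M)‖ * ‖(EuclideanSpace.single b 1 : ES d M)‖ :=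
          ContinuousLinearMap.le_opNorm _ _
      _ = _ := by rw [norm_single_one, mul_one]
  exact pow_le_pow_left₀ (norm_nonneg _) h3 2

/-- row ℓ² bound -/
lemma row_sq_le (A : OddTuple d → OddTuple d → ℂ) {N K : ℕ} (a : Blk d N) :
    ∑ c : Blk d K, ‖A a.1 c.1‖ ^ 2 ≤ blockNorm A N K ^ 2 := by
  set t : ℝ := Real.sqrt (∑ c : Blk d K, ‖A a.1 c.1‖ ^ 2) with ht
  have ht0 : 0 ≤ t := Real.sqrt_nonneg _
  have htsq : t ^ 2 = ∑ c : Blk d K, ‖A a.1 c.1‖ ^ 2 :=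
    Real.sq_sqrt (Finset.sum_nonneg fun i _ => sq_nonneg _)
  -- the conjugated row vector
  set y : ES d K := (WithLp.equiv 2 _).symm (fun c : Blk d K => (starRingEnd ℂ) (A a.1 c.1))
    with hy
  have hyc : ∀ c : Blk d K, y c = (starRingEnd ℂ) (A a.1 c.1) := fun c =>
    rfl
  have hynorm : ‖y‖ = t := by
    rw [EuclideanSpace.norm_eq, ht]
    congr 1
    exact Finset.sum_congr rfl fun c _ => by rw [hyc]; simp
  have hcoord : (PhiE d N K (blkM A N K) y) a = (t ^ 2 : ℝ) := by
    rw [PhiE_apply]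
    have : ∀ c : Blk d K, (blkM A N K) a c * y c = ((‖A a.1 c.1‖ ^ 2 : ℝ) : ℂ) := by
      intro c
      rw [hyc]
      show A a.1 c.1 * (starRingEnd ℂ) (A a.1 c.1) = _
      rw [Complex.mul_conj]
      norm_cast
      rw [← Complex.sq_norm]
    rw [Finset.sum_congr rfl fun c _ => this c]
    rw [htsq]
    push_cast
    rfl
  have hle : t ^ 2 ≤ blockNorm A N K * t := by
    have h1 : (t ^ 2 : ℝ) = ‖(PhiE d N K (blkM A N K) y) a‖ := by
      rw [hcoord]
      rw [Complex.norm_real, Real.norm_eq_abs, abs_of_nonneg (sq_nonneg t)]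
    rw [h1]
    calc ‖(PhiE d N K (blkM A N K) y) a‖ ≤ ‖PhiE d N K (blkM A N K) y‖ := coord_le_norm _ _
      _ ≤ ‖PhiE d N K (blkM A N K)‖ * ‖y‖ := ContinuousLinearMap.le_opNorm _ _
      _ = blockNorm A N K * t := by rw [blockNorm_def, hynorm]
  have hbn0 : 0 ≤ blockNorm A N K := by rw [blockNorm_def]; exact norm_nonneg _
  rcases eq_or_lt_of_le ht0 with h0 | h0
  · rw [← htsq, ← h0]
    simpa using sq_nonneg (blockNorm A N K)
  · have : t ≤ blockNorm A N K := by
      have := (mul_le_mul_iff_left₀ h0).mp (by linarith [hle, sq t] : t * t ≤ blockNorm A N K * t)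
      exact this
    rw [← htsq]
    exact pow_le_pow_left₀ ht0 this 2

/-- Cauchy–Schwarz block bound for row times column. -/
lemma rowcol_le (A B : OddTuple d → OddTuple d → ℂ) {N K M : ℕ} (a : Blk d N) (b : Blk d M) :
    ∑ c : Blk d K, ‖A a.1 c.1‖ * ‖B c.1 b.1‖ ≤ blockNorm A N K * blockNorm B K M := by
  have hcs := Finset.sum_mul_sq_le_sq_mul_sq Finset.univ
    (fun c : Blk d K => ‖A a.1 c.1‖) (fun c => ‖B c.1 b.1‖)
  have h1 := row_sq_le A (K := K) a
  have h2 := col_sq_le B (K := K) b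
  have hbn0 : 0 ≤ blockNorm A N K := by rw [blockNorm_def]; exact norm_nonneg _
  have hbn0' : 0 ≤ blockNorm B K M := by rw [blockNorm_def]; exact norm_nonneg _
  have hsum0 : 0 ≤ ∑ c : Blk d K, ‖A a.1 c.1‖ * ‖B c.1 b.1‖ :=
    Finset.sum_nonneg fun c _ => mul_nonneg (norm_nonneg _) (norm_nonneg _)
  have key : (∑ c : Blk d K, ‖A a.1 c.1‖ * ‖B c.1 b.1‖) ^ 2
      ≤ (blockNorm A N K * blockNorm B K M) ^ 2 := by
    calc _ ≤ (∑ c : Blk d K, ‖A a.1 c.1‖ ^ 2) * ∑ c : Blk d K, ‖B c.1 b.1‖ ^ 2 := hcs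
      _ ≤ blockNorm A N K ^ 2 * blockNorm B K M ^ 2 := by
          apply mul_le_mul h1 h2 (Finset.sum_nonneg fun i _ => sq_nonneg _) (by positivity)
      _ = _ := by ring
  exact (pow_le_pow_iff_left₀ hsum0 (by positivity) two_ne_zero).mp key

end Core
section Core2

variable {d : ℕ}

lemma wE_pos (hd : 1 ≤ d) (a : OddTuple d) : 1 ≤ wE a := by
  have i0 : (⟨0, hd⟩ : Fin d) ∈ Finset.univ := Finset.mem_univ _
  have h1 : a.1 ⟨0, hd⟩ ≤ wE a := Finset.single_le_sum (fun j _ => Nat.zero_le _) i0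
  have h2 := a.2 ⟨0, hd⟩
  rcases h2 with ⟨k, hk⟩
  omega

lemma subsingleton_ES {N : ℕ} (h : IsEmpty (Blk d N)) : Subsingleton (ES d N) :=
  ⟨fun x y => by ext c; exact h.elim c⟩

lemma blockNorm_zero_left (A : OddTuple d → OddTuple d → ℂ) {N : ℕ} (M : ℕ)
    (h : IsEmpty (Blk d N)) : blockNorm A N M = 0 := by
  rw [blockNorm_def]
  have := subsingleton_ES (d := d) h
  have : PhiE d N M (blkM A N M) = 0 := by
    apply ContinuousLinearMap.ext
    intro v
    exact Subsingleton.elim _ _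
  rw [this, norm_zero]

lemma blockNorm_zero_right (A : OddTuple d → OddTuple d → ℂ) (N : ℕ) {M : ℕ}
    (h : IsEmpty (Blk d M)) : blockNorm A N M = 0 := by
  rw [blockNorm_def]
  have hsub := subsingleton_ES (d := d) h
  have : PhiE d N M (blkM A N M) = 0 := by
    apply ContinuousLinearMap.ext
    intro v
    have hv : v = 0 := Subsingleton.elim _ _
    rw [hv]
    simp
  rw [this, norm_zero]

lemma blockNorm_nonneg (A : OddTuple d → OddTuple d → ℂ) (N M : ℕ) :
    0 ≤ blockNorm A N M := by rw [blockNorm_def]; exact norm_nonneg _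

lemma blkM_smul (c : ℂ) (X : OddTuple d → OddTuple d → ℂ) (N M : ℕ) :
    blkM (c • X) N M = c • blkM X N M := by
  ext a b
  simp [blkM, Pi.smul_apply]

lemma blockNorm_smul (c : ℂ) (X : OddTuple d → OddTuple d → ℂ) (N M : ℕ) :
    blockNorm (c • X) N M = ‖c‖ * blockNorm X N M := by
  rw [blockNorm_def, blockNorm_def, blkM_smul, map_smul]
  exact norm_smul c (PhiE d N M (blkM X N M))

lemma blockNorm_sub_comm (X Y : OddTuple d → OddTuple d → ℂ) (N M : ℕ) :
    blockNorm (X - Y) N M = blockNorm (Y - X) N M := by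
  rw [blockNorm_def, blockNorm_def]
  have h : blkM (X - Y) N M = -(blkM (Y - X) N M) := by
    ext a b
    simp only [blkM, Matrix.neg_apply, Matrix.of_apply, Pi.sub_apply]
    ring
  rw [h, map_neg, norm_neg]

/-- Fact F: block norm of an entrywise `tsum`. -/
lemma blockNorm_tsum_le {ι : Type*} (F : ι → OddTuple d → OddTuple d → ℂ)
    (u : ι → ℕ → ℕ → ℝ)
    (hu : ∀ N M, Summable (fun i => u i N M))
    (hb : ∀ i N M, blockNorm (F i) N M ≤ u i N M)
    (S : OddTuple d → OddTuple d → ℂ)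
    (hS : ∀ a b, S a b = ∑' i, F i a b)
    (N M : ℕ) : blockNorm S N M ≤ ∑' i, u i N M := by
  set L : ι → (ES d M →L[ℂ] ES d N) := fun i => PhiE d N M (blkM (F i) N M) with hL
  have hnorm : ∀ i, ‖L i‖ ≤ u i N M := fun i => by
    have := hb i N M
    rwa [blockNorm_def] at this
  have hnormsum : Summable (fun i => ‖L i‖) :=
    Summable.of_nonneg_of_le (fun i => norm_nonneg _) hnorm (hu N M)
  have hsumL : Summable L := Summable.of_norm hnormsum
  set T := ∑' i, L i with hT
  have hTS : PhiE d N M (blkM S N M) = T := by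
    apply ContinuousLinearMap.ext
    intro v
    have hlin : (PhiE d N M (blkM S N M)).toLinearMap = T.toLinearMap := by
      apply Module.Basis.ext (PiLp.basisFun 2 ℂ (Blk d M))
      intro b
      have hbb : (PiLp.basisFun 2 ℂ (Blk d M)) b = EuclideanSpace.single b 1 := by
        rw [PiLp.basisFun_apply]
      rw [hbb]
      show PhiE d N M (blkM S N M) (EuclideanSpace.single b 1)
          = T (EuclideanSpace.single b 1)
      have φ := ContinuousLinearMap.apply ℂ (ES d N) (EuclideanSpace.single b 1 : ES d M)
      have h1 : T (EuclideanSpace.single b 1) = ∑' i, L i (EuclideanSpace.single b 1) :=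
        (ContinuousLinearMap.apply ℂ (ES d N)
          (EuclideanSpace.single b 1 : ES d M)).map_tsum hsumL
      have hs2 : Summable (fun i => L i (EuclideanSpace.single b 1 : ES d M)) :=
        (hsumL.hasSum.mapL (ContinuousLinearMap.apply ℂ (ES d N)
          (EuclideanSpace.single b 1 : ES d M))).summable
      ext a
      have h2 : (T (EuclideanSpace.single b 1)) a
          = ∑' i, (L i (EuclideanSpace.single b 1)) a := by
        rw [h1]
        exact (EuclideanSpace.proj a).map_tsum hs2
      have h3 : ∀ i, (L i (EuclideanSpace.single b 1)) a = F i a.1 b.1 := fun i =>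
        apply_single N M _ b a
      rw [show (PhiE d N M (blkM S N M) (EuclideanSpace.single b 1)) a = S a.1 b.1 from
        apply_single N M _ b a, h2, hS]
      exact (tsum_congr h3).symm
    exact LinearMap.congr_fun hlin v
  rw [blockNorm_def, hTS]
  calc ‖T‖ ≤ ∑' i, ‖L i‖ := norm_tsum_le_tsum_norm hnormsum
    _ ≤ ∑' i, u i N M := Summable.tsum_le_tsum hnorm hnormsum (hu N M)

end Core2
section Core3

variable {d : ℕ}

lemma blkM_piece (A B : OddTuple d → OddTuple d → ℂ) (K N M : ℕ) :
    blkM (fun a b => ∑ c : Blk d K, A a c.1 * B c.1 b) N M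
      = blkM A N K * blkM B K M := by
  ext a b
  simp [blkM, Matrix.mul_apply]

lemma PhiE_mul (K N M : ℕ) (X : Matrix (Blk d N) (Blk d K) ℂ) (Y : Matrix (Blk d K) (Blk d M) ℂ) :
    PhiE d N M (X * Y) = (PhiE d N K X).comp (PhiE d K M Y) := by
  have h2 : Matrix.toEuclideanLin (X * Y)
      = (Matrix.toEuclideanLin X).comp (Matrix.toEuclideanLin Y) := by
    rw [Matrix.toEuclideanLin_eq_toLin]
    exact Matrix.toLin_mul (PiLp.basisFun 2 ℂ (Blk d M)) (PiLp.basisFun 2 ℂ (Blk d K))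
      (PiLp.basisFun 2 ℂ (Blk d N)) X Y
  apply ContinuousLinearMap.ext
  intro v
  show (Matrix.toEuclideanLin (X * Y)) v
      = (Matrix.toEuclideanLin X) ((Matrix.toEuclideanLin Y) v)
  rw [h2]
  rfl

lemma blockNorm_piece_le (A B : OddTuple d → OddTuple d → ℂ) (K N M : ℕ) :
    blockNorm (fun a b => ∑ c : Blk d K, A a c.1 * B c.1 b) N M
      ≤ blockNorm A N K * blockNorm B K M := by
  rw [blockNorm_def, blkM_piece, PhiE_mul, blockNorm_def, blockNorm_def]
  exact ContinuousLinearMap.opNorm_comp_le _ _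

/-- entrywise decomposition of `matMul` over weight blocks. -/
lemma matMul_eq_tsum_blocks (A B : OddTuple d → OddTuple d → ℂ)
    (hsum : ∀ N M : ℕ, Summable (fun K => blockNorm A N K * blockNorm B K M))
    (a b : OddTuple d) :
    matMul A B a b = ∑' K : ℕ, ∑ c : Blk d K, A a c.1 * B c.1 b := by
  classical
  set e := Equiv.sigmaFiberEquiv (wE (d := d)) with he
  have hslice : ∀ K : ℕ, ∑ c : Blk d K, ‖A a c.1 * B c.1 b‖
      ≤ blockNorm A (wE a) K * blockNorm B K (wE b) := by
    intro K
    have : ∀ c : Blk d K, ‖A a c.1 * B c.1 b‖ = ‖A a c.1‖ * ‖B c.1 b‖ := fun c => norm_mul _ _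
    rw [Finset.sum_congr rfl fun c _ => this c]
    exact rowcol_le A B (⟨a, rfl⟩ : Blk d (wE a)) (⟨b, rfl⟩ : Blk d (wE b))
  have hgsum : Summable (fun p : (Σ K : ℕ, Blk d K) => ‖A a p.2.1 * B p.2.1 b‖) := by
    rw [summable_sigma_of_nonneg (fun p => norm_nonneg _)]
    constructor
    · intro K; exact (hasSum_fintype _).summable
    · apply Summable.of_nonneg_of_le
        (fun K => tsum_nonneg (fun c => norm_nonneg _))
        (fun K => ?_) (hsum (wE a) (wE b))
      rw [tsum_fintype]
      exact hslice K
  have hfsum : Summable (fun p : (Σ K : ℕ, Blk d K) => A a (e p) * B (e p) b) :=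
    Summable.of_norm hgsum
  have hfsum' : Summable (fun c : OddTuple d => A a c * B c b) := by
    rw [← Equiv.summable_iff e]
    exact hfsum
  have h1 : matMul A B a b = ∑' p : (Σ K : ℕ, Blk d K), A a (e p) * B (e p) b :=
    (Equiv.tsum_eq e (fun c => A a c * B c b)).symm
  rw [h1, Summable.tsum_sigma hfsum]
  apply tsum_congr
  intro K
  rw [tsum_fintype]
  rfl

/-- Fact A: block operator norm of the product is bounded by the convolution of the
block norms. -/
lemma blockNorm_matMul_le (A B : OddTuple d → OddTuple d → ℂ)
    (hsum : ∀ N M : ℕ, Summable (fun K => blockNorm A N K * blockNorm B K M))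
    (N M : ℕ) :
    blockNorm (matMul A B) N M ≤ ∑' K : ℕ, blockNorm A N K * blockNorm B K M := by
  exact blockNorm_tsum_le (fun K a b => ∑ c : Blk d K, A a c.1 * B c.1 b)
    (fun K N M => blockNorm A N K * blockNorm B K M) hsum
    (fun K N M => blockNorm_piece_le A B K N M)
    (matMul A B) (matMul_eq_tsum_blocks A B hsum) N M

end Core3
section Analytic

open Real

/-- The Töplitz-type ratio. -/
noncomputable def rr (x y : ℝ) : ℝ := (Real.sqrt (min x y) + |x - y|) / Real.sqrt (min x y)

lemma rr_comm (x y : ℝ) : rr x y = rr y x := by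
  unfold rr; rw [min_comm, abs_sub_comm]

lemma one_le_rr {x y : ℝ} (hx : 1 ≤ x) (hy : 1 ≤ y) : 1 ≤ rr x y := by
  have hm : (1 : ℝ) ≤ min x y := le_min hx hy
  have hs : (1 : ℝ) ≤ Real.sqrt (min x y) := Real.one_le_sqrt.mpr hm
  have hs0 : 0 < Real.sqrt (min x y) := by linarith
  rw [rr, le_div_iff₀ hs0, one_mul]
  have := abs_nonneg (x - y)
  linarith

lemma rr_nonneg {x y : ℝ} (hx : 1 ≤ x) (hy : 1 ≤ y) : 0 ≤ rr x y :=
  le_trans zero_le_one (one_le_rr hx hy)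

private lemma sqrt_sub_le {x y : ℝ} (hx : 1 ≤ x) (hxy : x ≤ y) :
    Real.sqrt y ≤ Real.sqrt x + (y - x) := by
  have h1 : (0:ℝ) ≤ x := by linarith
  have h2 : (0:ℝ) ≤ y := by linarith
  have sx := Real.sq_sqrt h1
  have sy := Real.sq_sqrt h2
  have hsx : 1 ≤ Real.sqrt x := Real.one_le_sqrt.mpr hx
  have hsxy : Real.sqrt x ≤ Real.sqrt y := Real.sqrt_le_sqrt hxy
  nlinarith [Real.sqrt_nonneg y]

private lemma rr_submul_aux {x y z : ℝ} (hx : 1 ≤ x) (hy : 1 ≤ y) (hz : 1 ≤ z)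
    (hxz : x ≤ z) : rr x z ≤ rr x y * rr y z := by
  have hsx : 1 ≤ Real.sqrt x := Real.one_le_sqrt.mpr hx
  have hsy : 1 ≤ Real.sqrt y := Real.one_le_sqrt.mpr hy
  have hsz : 1 ≤ Real.sqrt z := Real.one_le_sqrt.mpr hz
  have hsx0 : 0 < Real.sqrt x := by linarith
  have hsy0 : 0 < Real.sqrt y := by linarith
  have hsz0 : 0 < Real.sqrt z := by linarith
  have sqx := Real.sq_sqrt (le_trans zero_le_one hx)
  have sqy := Real.sq_sqrt (le_trans zero_le_one hy)
  have sqz := Real.sq_sqrt (le_trans zero_le_one hz)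
  have hminxz : min x z = x := min_eq_left hxz
  have habsxz : |x - z| = z - x := by rw [abs_sub_comm]; exact abs_of_nonneg (by linarith)
  rcases le_total y x with h1 | h1
  · -- y ≤ x ≤ z
    have hminxy : min x y = y := min_eq_right h1
    have hminyz : min y z = y := min_eq_left (le_trans h1 hxz)
    have habsxy : |x - y| = x - y := abs_of_nonneg (by linarith)
    have habsy : |y - z| = z - y := by rw [abs_sub_comm]; exact abs_of_nonneg (by linarith)
    rw [rr, rr, rr, hminxz, hminxy, hminyz, habsxz, habsxy, habsy]
    rw [div_mul_div_comm, div_le_div_iff₀ (by positivity) (by positivity)]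
    have hsyx : Real.sqrt y ≤ Real.sqrt x := Real.sqrt_le_sqrt h1
    nlinarith [mul_nonneg (sub_nonneg.2 hsyx) (sub_nonneg.2 hxz),
      mul_nonneg (sub_nonneg.2 h1) (sub_nonneg.2 (le_trans h1 hxz)),
      mul_nonneg (mul_nonneg (sub_nonneg.2 h1) (sub_nonneg.2 (le_trans h1 hxz))) hsy0.le,
      mul_nonneg (sub_nonneg.2 h1) hsy0.le,
      mul_nonneg (sub_nonneg.2 hsyx) hsy0.le]
  rcases le_total y z with h2 | h2
  · -- x ≤ y ≤ z
    have hminxy : min x y = x := min_eq_left h1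
    have hminyz : min y z = y := min_eq_left h2
    have habsxy : |x - y| = y - x := by rw [abs_sub_comm]; exact abs_of_nonneg (by linarith)
    have habsyz : |y - z| = z - y := by rw [abs_sub_comm]; exact abs_of_nonneg (by linarith)
    rw [rr, rr, rr, hminxz, hminxy, hminyz, habsxz, habsxy, habsyz]
    rw [div_mul_div_comm, div_le_div_iff₀ (by positivity) (by positivity)]
    -- key: √y − √x ≤ y − x
    have hkey : Real.sqrt y ≤ Real.sqrt x + (y - x) := sqrt_sub_le hx h1
    have hzy : 0 ≤ z - y := by linarith
    -- (√x + (z−x)) * √x √y ≤ (√x + (y−x))(√y + (z−y)) * √x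
    nlinarith [mul_nonneg hzy (sub_nonneg.2 hkey), mul_nonneg (mul_nonneg hzy
      (sub_nonneg.2 hkey)) hsx0.le, mul_nonneg (sub_nonneg.2 h1) hsx0.le,
      mul_nonneg (sub_nonneg.2 h1) (sub_nonneg.2 h2)]
  · -- x ≤ z ≤ y
    have hminxy : min x y = x := min_eq_left (le_trans hxz h2)
    have hminyz : min y z = z := min_eq_right h2
    have habsxy : |x - y| = y - x := by rw [abs_sub_comm]; exact abs_of_nonneg (by linarith)
    have habsyz : |y - z| = y - z := abs_of_nonneg (by linarith)
    rw [rr, rr, rr, hminxz, hminxy, hminyz, habsxz, habsxy, habsyz]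
    rw [div_mul_div_comm, div_le_div_iff₀ (by positivity) (by positivity)]
    nlinarith [mul_nonneg (sub_nonneg.2 h2) hsx0.le, mul_nonneg (sub_nonneg.2 h2)
      (mul_nonneg hsx0.le hsz0.le), mul_nonneg (sub_nonneg.2 hxz) (sub_nonneg.2 hsz),
      mul_nonneg (mul_nonneg (sub_nonneg.2 h2) (sub_nonneg.2 hxz)) hsx0.le,
      mul_nonneg (sub_nonneg.2 (le_trans hxz h2)) (sub_nonneg.2 hsz)]

lemma rr_submul {x y z : ℝ} (hx : 1 ≤ x) (hy : 1 ≤ y) (hz : 1 ≤ z) :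
    rr x z ≤ rr x y * rr y z := by
  rcases le_total x z with h | h
  · exact rr_submul_aux hx hy hz h
  · rw [rr_comm, mul_comm, rr_comm x y, rr_comm y z]
    exact rr_submul_aux hz hy hx h

end Analytic
section Weights

lemma one_le_mul'' {a b : ℝ} (ha : 1 ≤ a) (hb : 1 ≤ b) : 1 ≤ a * b := by nlinarith

lemma mwt_eq (s α : ℝ) (N M : ℕ) :
    mwt s α N M = ((N : ℝ) * (M : ℝ)) ^ α * (rr (N : ℝ) (M : ℝ)) ^ (s / 2) := rfl

lemma mwtPlus_eq (s α : ℝ) (N M : ℕ) :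
    mwtPlus s α N M = ((N : ℝ) * (M : ℝ)) ^ α * (1 + |(N : ℝ) - (M : ℝ)|) *
      (rr (N : ℝ) (M : ℝ)) ^ (s / 2) := rfl

lemma one_le_cast {N : ℕ} (h : 1 ≤ N) : (1 : ℝ) ≤ (N : ℝ) := by exact_mod_cast h

lemma one_le_mwt {s α : ℝ} (hs : 0 ≤ s) (hα : 0 ≤ α) {N M : ℕ} (hN : 1 ≤ N) (hM : 1 ≤ M) :
    1 ≤ mwt s α N M := by
  rw [mwt_eq]
  have h1 : (1 : ℝ) ≤ ((N : ℝ) * M) := one_le_mul'' (one_le_cast hN) (one_le_cast hM)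
  have h2 : (1 : ℝ) ≤ ((N : ℝ) * M) ^ α := Real.one_le_rpow h1 hα
  have h3 : (1 : ℝ) ≤ (rr (N : ℝ) M) ^ (s / 2) :=
    Real.one_le_rpow (one_le_rr (one_le_cast hN) (one_le_cast hM)) (by linarith)
  exact one_le_mul'' h2 h3

lemma one_le_mwtPlus {s α : ℝ} (hs : 0 ≤ s) (hα : 0 ≤ α) {N M : ℕ} (hN : 1 ≤ N) (hM : 1 ≤ M) :
    1 ≤ mwtPlus s α N M := by
  rw [mwtPlus_eq]
  have h1 : (1 : ℝ) ≤ ((N : ℝ) * M) := one_le_mul'' (one_le_cast hN) (one_le_cast hM)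
  have h2 : (1 : ℝ) ≤ ((N : ℝ) * M) ^ α := Real.one_le_rpow h1 hα
  have h3 : (1 : ℝ) ≤ (rr (N : ℝ) M) ^ (s / 2) :=
    Real.one_le_rpow (one_le_rr (one_le_cast hN) (one_le_cast hM)) (by linarith)
  have h4 : (1 : ℝ) ≤ 1 + |(N : ℝ) - M| := by
    have := abs_nonneg ((N : ℝ) - M); linarith
  exact one_le_mul'' (one_le_mul'' h2 h4) h3

lemma mwt_pos {s α : ℝ} (hs : 0 ≤ s) (hα : 0 ≤ α) {N M : ℕ} (hN : 1 ≤ N) (hM : 1 ≤ M) :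
    0 < mwt s α N M := lt_of_lt_of_le one_pos (one_le_mwt hs hα hN hM)

lemma mwtPlus_pos {s α : ℝ} (hs : 0 ≤ s) (hα : 0 ≤ α) {N M : ℕ} (hN : 1 ≤ N) (hM : 1 ≤ M) :
    0 < mwtPlus s α N M := lt_of_lt_of_le one_pos (one_le_mwtPlus hs hα hN hM)

/-- `(NK)^α (KM)^α = (NM)^α K^{2α}` (for `K ≥ 1`). -/
lemma rpow_core {α : ℝ} {N K M : ℕ} (hK : 1 ≤ K) :
    ((N : ℝ) * K) ^ α * ((K : ℝ) * M) ^ α = ((N : ℝ) * M) ^ α * ((K : ℝ) ^ (2 * α)) := by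
  have hN : (0:ℝ) ≤ N := Nat.cast_nonneg N
  have hM : (0:ℝ) ≤ M := Nat.cast_nonneg M
  have hK0 : (0:ℝ) < K := by exact_mod_cast hK
  have h1 : ((N : ℝ) * K) ^ α * ((K : ℝ) * M) ^ α = (((N : ℝ) * K) * ((K : ℝ) * M)) ^ α :=
    (Real.mul_rpow (by positivity) (by positivity)).symm
  have h2 : ((N:ℝ) * K) * ((K:ℝ) * M) = ((N:ℝ) * M) * ((K:ℝ) * (K:ℝ)) := by ring
  rw [h1, h2, Real.mul_rpow (by positivity : (0:ℝ) ≤ (N:ℝ) * M) (by positivity)]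
  congr 1
  rw [two_mul, Real.rpow_add hK0, ← Real.mul_rpow hK0.le hK0.le]

end Weights
section WeightIneq

variable {s α : ℝ}

lemma rrpow_submul (hs : 0 ≤ s) {N K M : ℕ} (hN : 1 ≤ N) (hK : 1 ≤ K) (hM : 1 ≤ M) :
    (rr (N:ℝ) (M:ℝ)) ^ (s/2) ≤ (rr (N:ℝ) (K:ℝ)) ^ (s/2) * (rr (K:ℝ) (M:ℝ)) ^ (s/2) := by
  have h1 := rr_submul (one_le_cast hN) (one_le_cast hK) (one_le_cast hM)
  rw [← Real.mul_rpow (rr_nonneg (one_le_cast hN) (one_le_cast hK))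
    (rr_nonneg (one_le_cast hK) (one_le_cast hM))]
  exact Real.rpow_le_rpow (rr_nonneg (one_le_cast hN) (one_le_cast hM)) h1 (by linarith)

lemma weight_ineq (hs : 0 ≤ s) (hα0 : 0 < α) {N K M : ℕ}
    (hN : 1 ≤ N) (hK : 1 ≤ K) (hM : 1 ≤ M) :
    mwt s α N M ≤ mwt s α N K * mwtPlus s α K M *
      (((K:ℝ) ^ (2*α))⁻¹ * (1 + |(K:ℝ) - (M:ℝ)|)⁻¹) := by
  have hD : (0:ℝ) < 1 + |(K:ℝ) - (M:ℝ)| := by positivity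
  have hKp : (0:ℝ) < (K:ℝ) ^ (2*α) := Real.rpow_pos_of_pos (by exact_mod_cast hK) _
  have hrr := rrpow_submul hs hN hK hM
  have hNM : (0:ℝ) ≤ ((N:ℝ) * M) ^ α := Real.rpow_nonneg (by positivity) _
  have hc := rpow_core (α := α) (N := N) (M := M) hK
  have heq : mwt s α N K * mwtPlus s α K M * (((K:ℝ) ^ (2*α))⁻¹ * (1 + |(K:ℝ) - (M:ℝ)|)⁻¹)
      = ((N:ℝ) * M) ^ α * ((rr (N:ℝ) (K:ℝ)) ^ (s/2) * (rr (K:ℝ) (M:ℝ)) ^ (s/2)) := by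
    rw [mwt_eq, mwtPlus_eq]
    field_simp
    linear_combination ((rr (N:ℝ) (K:ℝ)) ^ (s/2) * (rr (K:ℝ) (M:ℝ)) ^ (s/2)) *
      hc
  rw [heq, mwt_eq]
  exact mul_le_mul_of_nonneg_left hrr hNM

lemma weight_ineq' (hs : 0 ≤ s) (hα0 : 0 < α) {N K M : ℕ}
    (hN : 1 ≤ N) (hK : 1 ≤ K) (hM : 1 ≤ M) :
    mwt s α N M ≤ mwtPlus s α N K * mwt s α K M *
      (((K:ℝ) ^ (2*α))⁻¹ * (1 + |(N:ℝ) - (K:ℝ)|)⁻¹) := by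
  have hD : (0:ℝ) < 1 + |(N:ℝ) - (K:ℝ)| := by positivity
  have hKp : (0:ℝ) < (K:ℝ) ^ (2*α) := Real.rpow_pos_of_pos (by exact_mod_cast hK) _
  have hrr := rrpow_submul hs hN hK hM
  have hNM : (0:ℝ) ≤ ((N:ℝ) * M) ^ α := Real.rpow_nonneg (by positivity) _
  have hc := rpow_core (α := α) (N := N) (M := M) hK
  have heq : mwtPlus s α N K * mwt s α K M * (((K:ℝ) ^ (2*α))⁻¹ * (1 + |(N:ℝ) - (K:ℝ)|)⁻¹)
      = ((N:ℝ) * M) ^ α * ((rr (N:ℝ) (K:ℝ)) ^ (s/2) * (rr (K:ℝ) (M:ℝ)) ^ (s/2)) := by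
    rw [mwt_eq, mwtPlus_eq]
    field_simp
    linear_combination ((rr (N:ℝ) (K:ℝ)) ^ (s/2) * (rr (K:ℝ) (M:ℝ)) ^ (s/2)) *
      hc
  rw [heq, mwt_eq]
  exact mul_le_mul_of_nonneg_left hrr hNM

lemma weight_ineq_plus (hs : 0 ≤ s) (hα0 : 0 < α) {N K M : ℕ}
    (hN : 1 ≤ N) (hK : 1 ≤ K) (hM : 1 ≤ M) :
    mwtPlus s α N M ≤ mwtPlus s α N K * mwtPlus s α K M *
      (((K:ℝ) ^ (2*α))⁻¹ *
        (2 * (1 + |(N:ℝ) - (K:ℝ)|)⁻¹ + 2 * (1 + |(K:ℝ) - (M:ℝ)|)⁻¹)) := by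
  have hD1 : (0:ℝ) < 1 + |(N:ℝ) - (K:ℝ)| := by positivity
  have hD2 : (0:ℝ) < 1 + |(K:ℝ) - (M:ℝ)| := by positivity
  have hKp : (0:ℝ) < (K:ℝ) ^ (2*α) := Real.rpow_pos_of_pos (by exact_mod_cast hK) _
  have hrr := rrpow_submul hs hN hK hM
  have hNM : (0:ℝ) ≤ ((N:ℝ) * M) ^ α := Real.rpow_nonneg (by positivity) _
  have hc := rpow_core (α := α) (N := N) (M := M) hK
  have htri : 1 + |(N:ℝ) - (M:ℝ)| ≤ 2 * (1 + |(K:ℝ) - (M:ℝ)|) + 2 * (1 + |(N:ℝ) - (K:ℝ)|) := by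
    have := abs_sub_le (N:ℝ) (K:ℝ) (M:ℝ)
    have h1 := abs_nonneg ((N:ℝ) - K)
    have h2 := abs_nonneg ((K:ℝ) - M)
    linarith
  have heq : mwtPlus s α N K * mwtPlus s α K M * (((K:ℝ) ^ (2*α))⁻¹ *
        (2 * (1 + |(N:ℝ) - (K:ℝ)|)⁻¹ + 2 * (1 + |(K:ℝ) - (M:ℝ)|)⁻¹))
      = ((N:ℝ) * M) ^ α * ((rr (N:ℝ) (K:ℝ)) ^ (s/2) * (rr (K:ℝ) (M:ℝ)) ^ (s/2)) *
        (2 * (1 + |(K:ℝ) - (M:ℝ)|) + 2 * (1 + |(N:ℝ) - (K:ℝ)|)) := by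
    rw [mwtPlus_eq, mwtPlus_eq]
    field_simp
    linear_combination ((rr (N:ℝ) (K:ℝ)) ^ (s/2) * (rr (K:ℝ) (M:ℝ)) ^ (s/2)) * hc
  rw [heq, mwtPlus_eq]
  have hrr0 : (0:ℝ) ≤ (rr (N:ℝ) (M:ℝ)) ^ (s/2) :=
    Real.rpow_nonneg (rr_nonneg (one_le_cast hN) (one_le_cast hM)) _
  calc ((N:ℝ) * M) ^ α * (1 + |(N:ℝ) - (M:ℝ)|) * (rr (N:ℝ) (M:ℝ)) ^ (s/2)
      ≤ ((N:ℝ) * M) ^ α * (2 * (1 + |(K:ℝ) - (M:ℝ)|) + 2 * (1 + |(N:ℝ) - (K:ℝ)|)) *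
        ((rr (N:ℝ) (K:ℝ)) ^ (s/2) * (rr (K:ℝ) (M:ℝ)) ^ (s/2)) := by
        apply mul_le_mul
        · exact mul_le_mul_of_nonneg_left htri hNM
        · exact hrr
        · exact hrr0
        · positivity
    _ = _ := by ring

end WeightIneq

section TailSum

/-- The decay factor appearing in the convolution over intermediate weights. -/
noncomputable def tailK (α : ℝ) (M : ℕ) (K : ℕ) : ℝ :=
  if K = 0 then 0 else ((K:ℝ) ^ (2*α))⁻¹ * (1 + |(K:ℝ) - (M:ℝ)|)⁻¹

lemma tailK_nonneg (α : ℝ) (M K : ℕ) : 0 ≤ tailK α M K := by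
  unfold tailK
  split
  · exact le_refl 0
  · positivity

/-- Master analytic bound: uniform summability of the convolution tails. -/
lemma exists_conv_const {α : ℝ} (hα0 : 0 < α) (hα1 : α ≤ 1) :
    ∃ C : ℝ, 0 < C ∧ ∀ M : ℕ, Summable (tailK α M) ∧ (∑' K, tailK α M K) ≤ C := by
  set q : ℝ := (2+α)/(2-α) with hq
  have h2α : (0:ℝ) < 2 - α := by linarith
  have hq1 : 1 < q := by
    rw [hq, lt_div_iff₀ h2α]
    linarith
  set p : ℝ := (2+α)/(2*α) with hp
  have hp1 : 1 < p := by
    rw [hp, lt_div_iff₀ (by linarith)]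
    linarith
  have hpq : p.HolderConjugate q := by
    constructor
    · rw [hp, hq, inv_one]
      field_simp
      ring
    · linarith
    · linarith
  set g1 : ℕ → ℝ := fun K => ((K:ℝ) ^ ((2:ℝ)+α))⁻¹ with hg1
  have hg1sum : Summable g1 := by
    have : Summable (fun K : ℕ => (K:ℝ) ^ (-((2:ℝ)+α))) :=
      Real.summable_nat_rpow.mpr (by linarith)
    apply this.congr
    intro K
    rw [Real.rpow_neg (Nat.cast_nonneg K)]
  set Z2 : ℝ := ∑' j : ℕ, ((1+(j:ℝ)) ^ q)⁻¹ with hZ2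
  have hZ2sum : Summable (fun j : ℕ => ((1+(j:ℝ)) ^ q)⁻¹) := by
    have hf : Summable (fun n : ℕ => (n:ℝ) ^ (-q)) :=
      Real.summable_nat_rpow.mpr (by linarith)
    have hf2 : Summable (fun n : ℕ => ((n:ℝ) ^ q)⁻¹) := by
      apply hf.congr
      intro K
      rw [Real.rpow_neg (Nat.cast_nonneg K)]
    have := (summable_nat_add_iff 1).mpr hf2
    apply this.congr
    intro j
    push_cast
    rw [add_comm (j:ℝ) 1]
  have hZ2nonneg : ∀ j : ℕ, (0:ℝ) ≤ ((1+(j:ℝ)) ^ q)⁻¹ := fun j => by positivity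
  have hg1nonneg : ∀ K : ℕ, 0 ≤ g1 K := fun K => by positivity
  refine ⟨(∑' K, g1 K) + 2 * Z2 + 1, ?_, ?_⟩
  · have h1 : (0:ℝ) ≤ ∑' K, g1 K := tsum_nonneg hg1nonneg
    have h2 : (0:ℝ) ≤ Z2 := tsum_nonneg hZ2nonneg
    linarith
  intro M
  set g2 : ℕ → ℝ := fun K => ((1 + |(K:ℝ) - (M:ℝ)|) ^ q)⁻¹ with hg2
  have hg2nonneg : ∀ K, 0 ≤ g2 K := fun K => by positivity
  have hg2shift : ∀ n : ℕ, g2 (n + M) = ((1+(n:ℝ)) ^ q)⁻¹ := by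
    intro n
    have habs : |((n + M : ℕ):ℝ) - (M:ℝ)| = (n:ℝ) := by
      push_cast
      rw [show (n:ℝ) + M - M = (n:ℝ) by ring]
      exact abs_of_nonneg (Nat.cast_nonneg n)
    show ((1 + |((n + M : ℕ):ℝ) - (M:ℝ)|) ^ q)⁻¹ = ((1+(n:ℝ)) ^ q)⁻¹
    rw [habs]
  have hg2sum : Summable g2 :=
    (summable_nat_add_iff M).mp (hZ2sum.congr fun n => (hg2shift n).symm)
  -- Young's inequality pointwise
  have htail : ∀ K : ℕ, tailK α M K ≤ g1 K + g2 K := by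
    intro K
    rcases Nat.eq_zero_or_pos K with h0 | hK1
    · subst h0
      have hg10 : g1 0 = 0 := by
        show (((0:ℕ):ℝ) ^ ((2:ℝ)+α))⁻¹ = 0
        rw [Nat.cast_zero, Real.zero_rpow (by linarith : (2:ℝ) + α ≠ 0), inv_zero]
      rw [show tailK α M 0 = 0 from rfl, hg10, zero_add]
      exact hg2nonneg 0
    · have hK0 : (0:ℝ) < (K:ℝ) := by exact_mod_cast hK1
      set a : ℝ := ((K:ℝ) ^ (2*α))⁻¹ with ha
      set b : ℝ := (1 + |(K:ℝ) - (M:ℝ)|)⁻¹ with hb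
      have ha0 : 0 ≤ a := by positivity
      have hb0 : 0 ≤ b := by positivity
      have hy := Real.young_inequality a b hpq
      rw [abs_of_nonneg ha0, abs_of_nonneg hb0] at hy
      have hexp : 2*α*p = 2+α := by
        rw [hp]
        field_simp
      have hap : a ^ p = g1 K := by
        rw [ha, Real.inv_rpow (Real.rpow_nonneg hK0.le _) p, ← Real.rpow_mul hK0.le, hexp]
      have hbq : b ^ q = g2 K := by
        rw [hb, Real.inv_rpow (by positivity) q]
      have htk : tailK α M K = a * b := by
        unfold tailK
        rw [if_neg (Nat.pos_iff_ne_zero.mp hK1)]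
      rw [htk]
      calc a * b ≤ a ^ p / p + b ^ q / q := hy
        _ ≤ a ^ p + b ^ q := by
            have h1 : a ^ p / p ≤ a ^ p := div_le_self (by positivity) hp1.le
            have h2 : b ^ q / q ≤ b ^ q := div_le_self (by positivity) hq1.le
            linarith
        _ = g1 K + g2 K := by rw [hap, hbq]
  have hsummable : Summable (tailK α M) :=
    Summable.of_nonneg_of_le (tailK_nonneg α M) htail (hg1sum.add hg2sum)
  refine ⟨hsummable, ?_⟩
  have hfirst : ∑ i ∈ Finset.range M, g2 i ≤ Z2 := by
    rw [← Finset.sum_range_reflect g2 M]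
    have hterm : ∀ j ∈ Finset.range M, g2 (M - 1 - j) ≤ ((1+(j:ℝ)) ^ q)⁻¹ := by
      intro j hj
      have hjM : j < M := Finset.mem_range.mp hj
      have hcast : ((M - 1 - j : ℕ):ℝ) = (M:ℝ) - 1 - (j:ℝ) := by
        have h1 : 1 + j ≤ M := by omega
        rw [show M - 1 - j = M - (1 + j) by omega, Nat.cast_sub h1]
        push_cast
        ring
      have habs : |((M - 1 - j : ℕ):ℝ) - (M:ℝ)| = 1 + (j:ℝ) := by
        rw [hcast, show (M:ℝ) - 1 - (j:ℝ) - (M:ℝ) = -(1 + (j:ℝ)) by ring, abs_neg]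
        exact abs_of_nonneg (by positivity)
      show ((1 + |((M - 1 - j : ℕ):ℝ) - (M:ℝ)|) ^ q)⁻¹ ≤ ((1+(j:ℝ)) ^ q)⁻¹
      rw [habs]
      apply inv_anti₀ (Real.rpow_pos_of_pos (by positivity) q)
      exact Real.rpow_le_rpow (by positivity) (by linarith) (by linarith)
    calc ∑ j ∈ Finset.range M, g2 (M - 1 - j) ≤ ∑ j ∈ Finset.range M, ((1+(j:ℝ)) ^ q)⁻¹ :=
          Finset.sum_le_sum hterm
      _ ≤ Z2 := Summable.sum_le_tsum (Finset.range M) (fun i _ => hZ2nonneg i) hZ2sum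
  have hsplit : ∑ i ∈ Finset.range M, g2 i + ∑' i : ℕ, g2 (i + M) = ∑' i, g2 i :=
    Summable.sum_add_tsum_nat_add M hg2sum
  have hsecond : ∑' i : ℕ, g2 (i + M) = Z2 := tsum_congr hg2shift
  have hg2tsum : ∑' i, g2 i ≤ 2 * Z2 := by
    have h2 : (0:ℝ) ≤ Z2 := tsum_nonneg hZ2nonneg
    rw [← hsplit, hsecond]
    linarith
  calc ∑' K, tailK α M K ≤ ∑' K, (g1 K + g2 K) :=
        Summable.tsum_le_tsum htail hsummable (hg1sum.add hg2sum)
    _ = (∑' K, g1 K) + ∑' K, g2 K := Summable.tsum_add hg1sum hg2sum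
    _ ≤ (∑' K, g1 K) + 2 * Z2 + 1 := by linarith

end TailSum
section Products

variable {d : ℕ} {s α : ℝ}

lemma blk0_empty (hd : 1 ≤ d) : IsEmpty (Blk d 0) :=
  ⟨fun a => by have := wE_pos hd a.1; omega⟩

noncomputable def elE (hd : 1 ≤ d) : OddTuple d := ⟨fun _ => 1, fun _ => odd_one⟩

lemma mbound_nonneg (hd : 1 ≤ d) (hs : 0 ≤ s) (hα0 : 0 < α)
    {A : OddTuple d → OddTuple d → ℂ} {CA : ℝ} (hA : MBound s α A CA) : 0 ≤ CA :=
  le_trans (mul_nonneg (mwt_pos hs hα0.le (wE_pos hd (elE hd)) (wE_pos hd (elE hd))).le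
    (blockNorm_nonneg A _ _)) (hA (elE hd) (elE hd))

lemma mpbound_nonneg (hd : 1 ≤ d) (hs : 0 ≤ s) (hα0 : 0 < α)
    {B : OddTuple d → OddTuple d → ℂ} {CB : ℝ} (hB : MPBound s α B CB) : 0 ≤ CB :=
  le_trans (mul_nonneg (mwtPlus_pos hs hα0.le (wE_pos hd (elE hd)) (wE_pos hd (elE hd))).le
    (blockNorm_nonneg B _ _)) (hB (elE hd) (elE hd))

lemma tailK_eq {α : ℝ} {M K : ℕ} (hK : K ≠ 0) :
    tailK α M K = ((K:ℝ) ^ (2*α))⁻¹ * (1 + |(K:ℝ) - (M:ℝ)|)⁻¹ := if_neg hK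

/-- pointwise bound, variant A·B (`M_{s,α}` × `M⁺_{s,α}`). -/
lemma key_AB (hd : 1 ≤ d) (hs : 0 ≤ s) (hα0 : 0 < α)
    {A B : OddTuple d → OddTuple d → ℂ} {CA CB : ℝ}
    (hA : MBound s α A CA) (hB : MPBound s α B CB) (a b : OddTuple d) (K : ℕ) :
    mwt s α (wE a) (wE b) * (blockNorm A (wE a) K * blockNorm B K (wE b))
      ≤ CA * CB * tailK α (wE b) K := by
  set N := wE a with hNd
  set M := wE b with hMd
  have hN := wE_pos hd a
  have hM := wE_pos hd b
  have hCA0 : 0 ≤ CA := mbound_nonneg hd hs hα0 hA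
  have hCB0 : 0 ≤ CB := mpbound_nonneg hd hs hα0 hB
  have hmwt0 : 0 ≤ mwt s α N M := (mwt_pos hs hα0.le hN hM).le
  rcases Nat.eq_zero_or_pos K with h0 | hK1
  · subst h0
    rw [blockNorm_zero_right A N (blk0_empty hd)]
    simp [tailK]
  · rcases isEmpty_or_nonempty (Blk d K) with hE | hNE
    · rw [blockNorm_zero_right A N hE]
      have : 0 ≤ CA * CB * tailK α M K := by
        have := tailK_nonneg α M K; positivity
      simpa using this
    · obtain ⟨c⟩ := hNE
      have h1 : mwt s α N K * blockNorm A N K ≤ CA := by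
        have := hA a c.1; rwa [c.2] at this
      have h2 : mwtPlus s α K M * blockNorm B K M ≤ CB := by
        have := hB c.1 b; rwa [c.2] at this
      have hw := weight_ineq (N := N) (K := K) (M := M) hs hα0 hN hK1 hM
      have hbnA := blockNorm_nonneg A N K
      have hbnB := blockNorm_nonneg B K M
      have hmwtNK := (mwt_pos hs hα0.le hN hK1).le
      have hmwtKM := (mwtPlus_pos hs hα0.le hK1 hM).le
      have hτ0 : (0:ℝ) ≤ ((K:ℝ) ^ (2*α))⁻¹ * (1 + |(K:ℝ) - (M:ℝ)|)⁻¹ := by positivity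
      rw [tailK_eq (Nat.pos_iff_ne_zero.mp hK1)]
      calc mwt s α N M * (blockNorm A N K * blockNorm B K M)
          ≤ mwt s α N K * mwtPlus s α K M *
              (((K:ℝ) ^ (2*α))⁻¹ * (1 + |(K:ℝ) - (M:ℝ)|)⁻¹) *
              (blockNorm A N K * blockNorm B K M) := by
            apply mul_le_mul_of_nonneg_right hw (by positivity)
        _ = (mwt s α N K * blockNorm A N K) * (mwtPlus s α K M * blockNorm B K M) *
              (((K:ℝ) ^ (2*α))⁻¹ * (1 + |(K:ℝ) - (M:ℝ)|)⁻¹) := by ring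
        _ ≤ CA * CB * (((K:ℝ) ^ (2*α))⁻¹ * (1 + |(K:ℝ) - (M:ℝ)|)⁻¹) := by
            apply mul_le_mul_of_nonneg_right _ hτ0
            exact mul_le_mul h1 h2 (mul_nonneg hmwtKM hbnB) hCA0

/-- pointwise bound, variant B·A. -/
lemma key_BA (hd : 1 ≤ d) (hs : 0 ≤ s) (hα0 : 0 < α)
    {A B : OddTuple d → OddTuple d → ℂ} {CA CB : ℝ}
    (hA : MBound s α A CA) (hB : MPBound s α B CB) (a b : OddTuple d) (K : ℕ) :
    mwt s α (wE a) (wE b) * (blockNorm B (wE a) K * blockNorm A K (wE b))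
      ≤ CB * CA * tailK α (wE a) K := by
  set N := wE a with hNd
  set M := wE b with hMd
  have hN := wE_pos hd a
  have hM := wE_pos hd b
  have hCA0 : 0 ≤ CA := mbound_nonneg hd hs hα0 hA
  have hCB0 : 0 ≤ CB := mpbound_nonneg hd hs hα0 hB
  rcases Nat.eq_zero_or_pos K with h0 | hK1
  · subst h0
    rw [blockNorm_zero_right B N (blk0_empty hd)]
    simp [tailK]
  · rcases isEmpty_or_nonempty (Blk d K) with hE | hNE
    · rw [blockNorm_zero_right B N hE]
      have : 0 ≤ CB * CA * tailK α N K := by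
        have := tailK_nonneg α N K; positivity
      simpa using this
    · obtain ⟨c⟩ := hNE
      have h1 : mwtPlus s α N K * blockNorm B N K ≤ CB := by
        have := hB a c.1; rwa [c.2] at this
      have h2 : mwt s α K M * blockNorm A K M ≤ CA := by
        have := hA c.1 b; rwa [c.2] at this
      have hw := weight_ineq' (N := N) (K := K) (M := M) hs hα0 hN hK1 hM
      have hbnA := blockNorm_nonneg A K M
      have hbnB := blockNorm_nonneg B N K
      have hmwtNK := (mwtPlus_pos hs hα0.le hN hK1).le
      have hmwtKM := (mwt_pos hs hα0.le hK1 hM).le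
      have hτ0 : (0:ℝ) ≤ ((K:ℝ) ^ (2*α))⁻¹ * (1 + |(N:ℝ) - (K:ℝ)|)⁻¹ := by positivity
      have htt : tailK α N K = ((K:ℝ) ^ (2*α))⁻¹ * (1 + |(N:ℝ) - (K:ℝ)|)⁻¹ := by
        rw [tailK_eq (Nat.pos_iff_ne_zero.mp hK1), abs_sub_comm]
      rw [htt]
      calc mwt s α N M * (blockNorm B N K * blockNorm A K M)
          ≤ mwtPlus s α N K * mwt s α K M *
              (((K:ℝ) ^ (2*α))⁻¹ * (1 + |(N:ℝ) - (K:ℝ)|)⁻¹) *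
              (blockNorm B N K * blockNorm A K M) := by
            apply mul_le_mul_of_nonneg_right hw (by positivity)
        _ = (mwtPlus s α N K * blockNorm B N K) * (mwt s α K M * blockNorm A K M) *
              (((K:ℝ) ^ (2*α))⁻¹ * (1 + |(N:ℝ) - (K:ℝ)|)⁻¹) := by ring
        _ ≤ CB * CA * (((K:ℝ) ^ (2*α))⁻¹ * (1 + |(N:ℝ) - (K:ℝ)|)⁻¹) := by
            apply mul_le_mul_of_nonneg_right _ hτ0
            exact mul_le_mul h1 h2 (mul_nonneg hmwtKM hbnA) hCB0

/-- pointwise bound, plus-variant B₁·B₂. -/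
lemma key_plus (hd : 1 ≤ d) (hs : 0 ≤ s) (hα0 : 0 < α)
    {B1 B2 : OddTuple d → OddTuple d → ℂ} {C1 C2 : ℝ}
    (h1 : MPBound s α B1 C1) (h2 : MPBound s α B2 C2) (a b : OddTuple d) (K : ℕ) :
    mwtPlus s α (wE a) (wE b) * (blockNorm B1 (wE a) K * blockNorm B2 K (wE b))
      ≤ C1 * C2 * (2 * tailK α (wE a) K + 2 * tailK α (wE b) K) := by
  set N := wE a with hNd
  set M := wE b with hMd
  have hN := wE_pos hd a
  have hM := wE_pos hd b
  have hC10 : 0 ≤ C1 := mpbound_nonneg hd hs hα0 h1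
  have hC20 : 0 ≤ C2 := mpbound_nonneg hd hs hα0 h2
  rcases Nat.eq_zero_or_pos K with h0 | hK1
  · subst h0
    rw [blockNorm_zero_right B1 N (blk0_empty hd)]
    simp [tailK]
  · rcases isEmpty_or_nonempty (Blk d K) with hE | hNE
    · rw [blockNorm_zero_right B1 N hE]
      have : 0 ≤ C1 * C2 * (2 * tailK α N K + 2 * tailK α M K) := by
        have t1 := tailK_nonneg α N K
        have t2 := tailK_nonneg α M K
        positivity
      simpa using this
    · obtain ⟨c⟩ := hNE
      have hb1 : mwtPlus s α N K * blockNorm B1 N K ≤ C1 := by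
        have := h1 a c.1; rwa [c.2] at this
      have hb2 : mwtPlus s α K M * blockNorm B2 K M ≤ C2 := by
        have := h2 c.1 b; rwa [c.2] at this
      have hw := weight_ineq_plus (N := N) (K := K) (M := M) hs hα0 hN hK1 hM
      have hbn1 := blockNorm_nonneg B1 N K
      have hbn2 := blockNorm_nonneg B2 K M
      have hmwtNK := (mwtPlus_pos hs hα0.le hN hK1).le
      have hmwtKM := (mwtPlus_pos hs hα0.le hK1 hM).le
      have hτ0 : (0:ℝ) ≤ ((K:ℝ) ^ (2*α))⁻¹ *
          (2 * (1 + |(N:ℝ) - (K:ℝ)|)⁻¹ + 2 * (1 + |(K:ℝ) - (M:ℝ)|)⁻¹) := by positivity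
      have htt : 2 * tailK α N K + 2 * tailK α M K = ((K:ℝ) ^ (2*α))⁻¹ *
          (2 * (1 + |(N:ℝ) - (K:ℝ)|)⁻¹ + 2 * (1 + |(K:ℝ) - (M:ℝ)|)⁻¹) := by
        rw [tailK_eq (Nat.pos_iff_ne_zero.mp hK1), tailK_eq (Nat.pos_iff_ne_zero.mp hK1),
          abs_sub_comm (K:ℝ) (N:ℝ)]
        ring
      rw [htt]
      calc mwtPlus s α N M * (blockNorm B1 N K * blockNorm B2 K M)
          ≤ mwtPlus s α N K * mwtPlus s α K M * (((K:ℝ) ^ (2*α))⁻¹ *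
              (2 * (1 + |(N:ℝ) - (K:ℝ)|)⁻¹ + 2 * (1 + |(K:ℝ) - (M:ℝ)|)⁻¹)) *
              (blockNorm B1 N K * blockNorm B2 K M) := by
            apply mul_le_mul_of_nonneg_right hw (by positivity)
        _ = (mwtPlus s α N K * blockNorm B1 N K) * (mwtPlus s α K M * blockNorm B2 K M) *
              (((K:ℝ) ^ (2*α))⁻¹ *
              (2 * (1 + |(N:ℝ) - (K:ℝ)|)⁻¹ + 2 * (1 + |(K:ℝ) - (M:ℝ)|)⁻¹)) := by ring
        _ ≤ C1 * C2 * _ := by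
            apply mul_le_mul_of_nonneg_right _ hτ0
            exact mul_le_mul hb1 hb2 (mul_nonneg hmwtKM hbn2) hC10

end Products
section ProductBounds

variable {d : ℕ} {s α : ℝ}

lemma bn_prod_summable (hd : 1 ≤ d) {X Y : OddTuple d → OddTuple d → ℂ}
    (hmaj : ∀ a b : OddTuple d, ∃ h : ℕ → ℝ, Summable h ∧
      ∀ K, blockNorm X (wE a) K * blockNorm Y K (wE b) ≤ h K) :
    ∀ N M : ℕ, Summable (fun K => blockNorm X N K * blockNorm Y K M) := by
  intro N M
  rcases isEmpty_or_nonempty (Blk d N) with hE | hNE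
  · apply summable_zero.congr
    intro K
    rw [blockNorm_zero_left X K hE, zero_mul]
  rcases isEmpty_or_nonempty (Blk d M) with hE | hME
  · apply summable_zero.congr
    intro K
    rw [blockNorm_zero_right Y K hE, mul_zero]
  obtain ⟨a⟩ := hNE
  obtain ⟨b⟩ := hME
  obtain ⟨h, hsum, hle⟩ := hmaj a.1 b.1
  rw [← a.2, ← b.2]
  exact Summable.of_nonneg_of_le
    (fun K => mul_nonneg (blockNorm_nonneg _ _ _) (blockNorm_nonneg _ _ _)) hle hsum

lemma C_nonneg {C : ℝ} {α : ℝ}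
    (hC : ∀ M : ℕ, Summable (tailK α M) ∧ (∑' K, tailK α M K) ≤ C) : 0 ≤ C :=
  le_trans (tsum_nonneg (tailK_nonneg α 1)) (hC 1).2

lemma mbound_matMul (hd : 1 ≤ d) (hs : 0 ≤ s) (hα0 : 0 < α) {C : ℝ}
    (hC : ∀ M : ℕ, Summable (tailK α M) ∧ (∑' K, tailK α M K) ≤ C)
    {A B : OddTuple d → OddTuple d → ℂ} {CA CB : ℝ}
    (hA : MBound s α A CA) (hB : MPBound s α B CB) :
    MBound s α (matMul A B) (CA * CB * C) := by
  have hCA0 : 0 ≤ CA := mbound_nonneg hd hs hα0 hA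
  have hCB0 : 0 ≤ CB := mpbound_nonneg hd hs hα0 hB
  have hsum : ∀ N M : ℕ, Summable (fun K => blockNorm A N K * blockNorm B K M) := by
    apply bn_prod_summable hd
    intro a b
    have hpos := mwt_pos hs hα0.le (wE_pos hd a) (wE_pos hd b)
    refine ⟨fun K => (mwt s α (wE a) (wE b))⁻¹ * (CA * CB * tailK α (wE b) K),
      ((hC (wE b)).1.mul_left (CA * CB)).mul_left _, fun K => ?_⟩
    calc blockNorm A (wE a) K * blockNorm B K (wE b)
        = (mwt s α (wE a) (wE b))⁻¹ *
          (mwt s α (wE a) (wE b) * (blockNorm A (wE a) K * blockNorm B K (wE b))) :=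
          (inv_mul_cancel_left₀ hpos.ne' _).symm
      _ ≤ _ := mul_le_mul_of_nonneg_left (key_AB hd hs hα0 hA hB a b K)
          (inv_nonneg.mpr hpos.le)
  intro a b
  have hbound := blockNorm_matMul_le A B hsum (wE a) (wE b)
  have hmwt0 := (mwt_pos hs hα0.le (wE_pos hd a) (wE_pos hd b)).le
  calc mwt s α (wE a) (wE b) * blockNorm (matMul A B) (wE a) (wE b)
      ≤ mwt s α (wE a) (wE b) * ∑' K, blockNorm A (wE a) K * blockNorm B K (wE b) :=
        mul_le_mul_of_nonneg_left hbound hmwt0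
    _ = ∑' K, mwt s α (wE a) (wE b) * (blockNorm A (wE a) K * blockNorm B K (wE b)) :=
        tsum_mul_left.symm
    _ ≤ ∑' K, CA * CB * tailK α (wE b) K :=
        Summable.tsum_le_tsum (fun K => key_AB hd hs hα0 hA hB a b K)
          ((hsum (wE a) (wE b)).mul_left _) ((hC (wE b)).1.mul_left _)
    _ = CA * CB * ∑' K, tailK α (wE b) K := tsum_mul_left
    _ ≤ CA * CB * C :=
        mul_le_mul_of_nonneg_left (hC (wE b)).2 (mul_nonneg hCA0 hCB0)

lemma mbound_matMul' (hd : 1 ≤ d) (hs : 0 ≤ s) (hα0 : 0 < α) {C : ℝ}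
    (hC : ∀ M : ℕ, Summable (tailK α M) ∧ (∑' K, tailK α M K) ≤ C)
    {A B : OddTuple d → OddTuple d → ℂ} {CA CB : ℝ}
    (hA : MBound s α A CA) (hB : MPBound s α B CB) :
    MBound s α (matMul B A) (CB * CA * C) := by
  have hCA0 : 0 ≤ CA := mbound_nonneg hd hs hα0 hA
  have hCB0 : 0 ≤ CB := mpbound_nonneg hd hs hα0 hB
  have hsum : ∀ N M : ℕ, Summable (fun K => blockNorm B N K * blockNorm A K M) := by
    apply bn_prod_summable hd
    intro a b
    have hpos := mwt_pos hs hα0.le (wE_pos hd a) (wE_pos hd b)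
    refine ⟨fun K => (mwt s α (wE a) (wE b))⁻¹ * (CB * CA * tailK α (wE a) K),
      ((hC (wE a)).1.mul_left (CB * CA)).mul_left _, fun K => ?_⟩
    calc blockNorm B (wE a) K * blockNorm A K (wE b)
        = (mwt s α (wE a) (wE b))⁻¹ *
          (mwt s α (wE a) (wE b) * (blockNorm B (wE a) K * blockNorm A K (wE b))) :=
          (inv_mul_cancel_left₀ hpos.ne' _).symm
      _ ≤ _ := mul_le_mul_of_nonneg_left (key_BA hd hs hα0 hA hB a b K)
          (inv_nonneg.mpr hpos.le)
  intro a b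
  have hbound := blockNorm_matMul_le B A hsum (wE a) (wE b)
  have hmwt0 := (mwt_pos hs hα0.le (wE_pos hd a) (wE_pos hd b)).le
  calc mwt s α (wE a) (wE b) * blockNorm (matMul B A) (wE a) (wE b)
      ≤ mwt s α (wE a) (wE b) * ∑' K, blockNorm B (wE a) K * blockNorm A K (wE b) :=
        mul_le_mul_of_nonneg_left hbound hmwt0
    _ = ∑' K, mwt s α (wE a) (wE b) * (blockNorm B (wE a) K * blockNorm A K (wE b)) :=
        tsum_mul_left.symm
    _ ≤ ∑' K, CB * CA * tailK α (wE a) K :=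
        Summable.tsum_le_tsum (fun K => key_BA hd hs hα0 hA hB a b K)
          ((hsum (wE a) (wE b)).mul_left _) ((hC (wE a)).1.mul_left _)
    _ = CB * CA * ∑' K, tailK α (wE a) K := tsum_mul_left
    _ ≤ CB * CA * C :=
        mul_le_mul_of_nonneg_left (hC (wE a)).2 (mul_nonneg hCB0 hCA0)

lemma mpbound_matMul (hd : 1 ≤ d) (hs : 0 ≤ s) (hα0 : 0 < α) {C : ℝ}
    (hC : ∀ M : ℕ, Summable (tailK α M) ∧ (∑' K, tailK α M K) ≤ C)
    {B1 B2 : OddTuple d → OddTuple d → ℂ} {C1 C2 : ℝ}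
    (h1 : MPBound s α B1 C1) (h2 : MPBound s α B2 C2) :
    MPBound s α (matMul B1 B2) (C1 * C2 * (4 * C)) := by
  have hC10 : 0 ≤ C1 := mpbound_nonneg hd hs hα0 h1
  have hC20 : 0 ≤ C2 := mpbound_nonneg hd hs hα0 h2
  have hsum : ∀ N M : ℕ, Summable (fun K => blockNorm B1 N K * blockNorm B2 K M) := by
    apply bn_prod_summable hd
    intro a b
    have hpos := mwtPlus_pos hs hα0.le (wE_pos hd a) (wE_pos hd b)
    refine ⟨fun K => (mwtPlus s α (wE a) (wE b))⁻¹ *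
        (C1 * C2 * (2 * tailK α (wE a) K + 2 * tailK α (wE b) K)),
      ((((hC (wE a)).1.mul_left 2).add ((hC (wE b)).1.mul_left 2)).mul_left
        (C1 * C2)).mul_left _, fun K => ?_⟩
    calc blockNorm B1 (wE a) K * blockNorm B2 K (wE b)
        = (mwtPlus s α (wE a) (wE b))⁻¹ *
          (mwtPlus s α (wE a) (wE b) * (blockNorm B1 (wE a) K * blockNorm B2 K (wE b))) :=
          (inv_mul_cancel_left₀ hpos.ne' _).symm
      _ ≤ _ := mul_le_mul_of_nonneg_left (key_plus hd hs hα0 h1 h2 a b K)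
          (inv_nonneg.mpr hpos.le)
  intro a b
  have hbound := blockNorm_matMul_le B1 B2 hsum (wE a) (wE b)
  have hmwt0 := (mwtPlus_pos hs hα0.le (wE_pos hd a) (wE_pos hd b)).le
  have hts : Summable (fun K => 2 * tailK α (wE a) K + 2 * tailK α (wE b) K) :=
    ((hC (wE a)).1.mul_left 2).add ((hC (wE b)).1.mul_left 2)
  calc mwtPlus s α (wE a) (wE b) * blockNorm (matMul B1 B2) (wE a) (wE b)
      ≤ mwtPlus s α (wE a) (wE b) * ∑' K, blockNorm B1 (wE a) K * blockNorm B2 K (wE b) :=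
        mul_le_mul_of_nonneg_left hbound hmwt0
    _ = ∑' K, mwtPlus s α (wE a) (wE b) *
          (blockNorm B1 (wE a) K * blockNorm B2 K (wE b)) := tsum_mul_left.symm
    _ ≤ ∑' K, C1 * C2 * (2 * tailK α (wE a) K + 2 * tailK α (wE b) K) :=
        Summable.tsum_le_tsum (fun K => key_plus hd hs hα0 h1 h2 a b K)
          ((hsum (wE a) (wE b)).mul_left _) (hts.mul_left _)
    _ = C1 * C2 * ∑' K, (2 * tailK α (wE a) K + 2 * tailK α (wE b) K) := tsum_mul_left
    _ ≤ C1 * C2 * (4 * C) := by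
        apply mul_le_mul_of_nonneg_left _ (mul_nonneg hC10 hC20)
        rw [Summable.tsum_add ((hC (wE a)).1.mul_left 2) ((hC (wE b)).1.mul_left 2),
          tsum_mul_left, tsum_mul_left]
        have ha := (hC (wE a)).2
        have hb := (hC (wE b)).2
        linarith

end ProductBounds
section Series

variable {d : ℕ} {s α : ℝ}

lemma matPow_one (B : OddTuple d → OddTuple d → ℂ) : matPow B 1 = B := by
  funext a b
  show ∑' c : OddTuple d, B a c * (if c = b then 1 else 0) = B a b
  have h : ∀ c : OddTuple d, B a c * (if c = b then 1 else 0)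
      = (if c = b then B a b else 0) := by
    intro c
    by_cases hc : c = b
    · subst hc; simp
    · simp [hc]
  rw [tsum_congr h]
  exact tsum_ite_eq b (fun _ => B a b)

lemma mpbound_matPow (hd : 1 ≤ d) (hs : 0 ≤ s) (hα0 : 0 < α) {C : ℝ}
    (hC : ∀ M : ℕ, Summable (tailK α M) ∧ (∑' K, tailK α M K) ≤ C)
    {B : OddTuple d → OddTuple d → ℂ} {CB : ℝ} (hB : MPBound s α B CB) :
    ∀ k : ℕ, MPBound s α (matPow B (k+1)) ((4*C)^k * CB^(k+1)) := by
  intro k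
  induction k with
  | zero => rw [matPow_one]; simpa using hB
  | succ n ih =>
      have h := mpbound_matMul hd hs hα0 hC hB ih
      rw [show (4*C)^(n+1) * CB^(n+2) = CB * ((4*C)^n * CB^(n+1)) * (4*C) from by ring]
      exact h

/-- Fact G: summation of a series of matrices with geometric-type block bounds. -/
lemma factG (hd : 1 ≤ d) {W : ℕ → ℕ → ℝ}
    (hW : ∀ N M : ℕ, 1 ≤ N → 1 ≤ M → 1 ≤ W N M)
    (F : ℕ → OddTuple d → OddTuple d → ℂ) (δ : ℕ → ℝ)
    (hδ0 : ∀ k, 0 ≤ δ k) (hδ : Summable δ)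
    (hb : ∀ (k : ℕ) (a b : OddTuple d),
      W (wE a) (wE b) * blockNorm (F k) (wE a) (wE b) ≤ δ k) :
    ∃ S : OddTuple d → OddTuple d → ℂ,
      (∀ a b : OddTuple d, W (wE a) (wE b) * blockNorm S (wE a) (wE b) ≤ ∑' k, δ k) ∧
      Filter.Tendsto
        (fun m => sInf {c | 0 ≤ c ∧ ∀ a b : OddTuple d,
          W (wE a) (wE b) * blockNorm
            ((fun x y => ∑ k ∈ Finset.range m, F k x y) - S) (wE a) (wE b) ≤ c})
        Filter.atTop (nhds 0) := by
  -- block norms are bounded by δ at every pair of weights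
  have hbn : ∀ (k : ℕ) (N M : ℕ), blockNorm (F k) N M ≤ δ k := by
    intro k N M
    rcases isEmpty_or_nonempty (Blk d N) with hE | hNE
    · rw [blockNorm_zero_left _ _ hE]; exact hδ0 k
    rcases isEmpty_or_nonempty (Blk d M) with hE | hME
    · rw [blockNorm_zero_right _ _ hE]; exact hδ0 k
    obtain ⟨a⟩ := hNE
    obtain ⟨b⟩ := hME
    rw [← a.2, ← b.2]
    have hW1 := hW (wE a.1) (wE b.1) (wE_pos hd a.1) (wE_pos hd b.1)
    have hbn0 := blockNorm_nonneg (F k) (wE a.1) (wE b.1)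
    calc blockNorm (F k) (wE a.1) (wE b.1)
        ≤ W (wE a.1) (wE b.1) * blockNorm (F k) (wE a.1) (wE b.1) :=
          le_mul_of_one_le_left hbn0 hW1
      _ ≤ δ k := hb k a.1 b.1
  have hu : ∀ N M : ℕ, Summable (fun k => blockNorm (F k) N M) := fun N M =>
    Summable.of_nonneg_of_le (fun k => blockNorm_nonneg _ _ _) (fun k => hbn k N M) hδ
  -- entrywise summability
  have hent : ∀ (a b : OddTuple d), Summable (fun k => F k a b) := by
    intro a b
    apply Summable.of_norm
    apply Summable.of_nonneg_of_le (fun k => norm_nonneg _) _ hδ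
    intro k
    calc ‖F k a b‖ ≤ blockNorm (F k) (wE a) (wE b) :=
          entry_le_blockNorm (F k) (⟨a, rfl⟩ : Blk d (wE a)) (⟨b, rfl⟩ : Blk d (wE b))
      _ ≤ δ k := hbn k _ _
  set S : OddTuple d → OddTuple d → ℂ := fun a b => ∑' k, F k a b with hSdef
  have hSbn : ∀ N M : ℕ, blockNorm S N M ≤ ∑' k, blockNorm (F k) N M :=
    blockNorm_tsum_le F (fun k N M => blockNorm (F k) N M) hu
      (fun k N M => le_refl _) S (fun a b => rfl)
  refine ⟨S, ?_, ?_⟩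
  · intro a b
    have hW0 : 0 ≤ W (wE a) (wE b) :=
      le_trans zero_le_one (hW _ _ (wE_pos hd a) (wE_pos hd b))
    calc W (wE a) (wE b) * blockNorm S (wE a) (wE b)
        ≤ W (wE a) (wE b) * ∑' k, blockNorm (F k) (wE a) (wE b) :=
          mul_le_mul_of_nonneg_left (hSbn _ _) hW0
      _ = ∑' k, W (wE a) (wE b) * blockNorm (F k) (wE a) (wE b) := tsum_mul_left.symm
      _ ≤ ∑' k, δ k := Summable.tsum_le_tsum (fun k => hb k a b)
          ((hu _ _).mul_left _) hδ
  -- convergence of the partial sums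
  · set nrm : (OddTuple d → OddTuple d → ℂ) → ℝ := fun X =>
      sInf {c | 0 ≤ c ∧ ∀ a b : OddTuple d,
        W (wE a) (wE b) * blockNorm X (wE a) (wE b) ≤ c} with hnrm
    set P : ℕ → OddTuple d → OddTuple d → ℂ :=
      fun m x y => ∑ k ∈ Finset.range m, F k x y with hP
    set ε : ℕ → ℝ := fun m => ∑' k, δ (k + m) with hε
    have hδm : ∀ m, Summable (fun k => δ (k + m)) := fun m =>
      (summable_nat_add_iff m).mpr hδ
    have hε0 : ∀ m, 0 ≤ ε m := fun m => tsum_nonneg (fun k => hδ0 _)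
    have hεtend : Filter.Tendsto ε Filter.atTop (nhds 0) := tendsto_sum_nat_add δ
    have hmem : ∀ m, ε m ∈ {c | 0 ≤ c ∧ ∀ a b : OddTuple d,
        W (wE a) (wE b) * blockNorm (P m - S) (wE a) (wE b) ≤ c} := by
      intro m
      refine ⟨hε0 m, fun a b => ?_⟩
      rw [blockNorm_sub_comm]
      have hW0 : 0 ≤ W (wE a) (wE b) :=
        le_trans zero_le_one (hW _ _ (wE_pos hd a) (wE_pos hd b))
      have hSm : ∀ x y : OddTuple d, (S - P m) x y = ∑' k, F (k + m) x y := by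
        intro x y
        have hsp : ∑ i ∈ Finset.range m, F i x y + ∑' i, F (i + m) x y = ∑' i, F i x y :=
          Summable.sum_add_tsum_nat_add m (hent x y)
        show S x y - P m x y = ∑' k, F (k + m) x y
        have hS' : S x y = ∑' i, F i x y := rfl
        have hP' : P m x y = ∑ i ∈ Finset.range m, F i x y := rfl
        rw [hS', hP', ← hsp]
        ring
      have h1 := blockNorm_tsum_le (fun k => F (k + m))
        (fun k N M => blockNorm (F (k + m)) N M)
        (fun N M => (summable_nat_add_iff (f := fun k => blockNorm (F k) N M) m).mpr (hu N M))
        (fun k N M => le_refl _) (S - P m) hSm (wE a) (wE b)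
      calc W (wE a) (wE b) * blockNorm (S - P m) (wE a) (wE b)
          ≤ W (wE a) (wE b) * ∑' k, blockNorm (F (k + m)) (wE a) (wE b) :=
            mul_le_mul_of_nonneg_left h1 hW0
        _ = ∑' k, W (wE a) (wE b) * blockNorm (F (k + m)) (wE a) (wE b) :=
            tsum_mul_left.symm
        _ ≤ ∑' k, δ (k + m) := Summable.tsum_le_tsum (fun k => hb (k + m) a b)
            (((summable_nat_add_iff (f := fun k => blockNorm (F k) (wE a) (wE b)) m).mpr (hu _ _)).mul_left _) (hδm m)
    have hle : ∀ m, nrm (P m - S) ≤ ε m := fun m =>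
      csInf_le ⟨0, fun x hx => hx.1⟩ (hmem m)
    have hge : ∀ m, 0 ≤ nrm (P m - S) := fun m =>
      Real.sInf_nonneg (fun x hx => hx.1)
    exact squeeze_zero hge hle hεtend

end Series
/-- (Exponential estimates (2.5)–(2.6) of Lemma 2.3 of the paper.)
For `s ≥ 0`, `0 < α ≤ 1` there is `c(α,s,d) > 0` such that for `A ∈ M_{s,α}` with
`|A|_{s,α} ≤ M_A` and `B ∈ M⁺_{s,α}` with `|B|_{s,α+} ≤ M_B`:
(i) `e^B − Id = ∑_{k≥1} B^k/k!` converges in `M⁺_{s,α}` with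
    `|e^B − Id|_{s,α+} ≤ M_B exp(c M_B)`;
(ii) `A e^B` and `e^B A` converge in `M_{s,α}` with norms `≤ M_A exp(c M_B)`. -/
theorem statement14 (d : ℕ) (hd : 1 ≤ d) (s α : ℝ) (hs : 0 ≤ s) (hα0 : 0 < α) (hα1 : α ≤ 1) :
    ∃ c : ℝ, 0 < c ∧
      ∀ (A B : OddTuple d → OddTuple d → ℂ) (MA MB : ℝ),
        MBound s α A MA → MPBound s α B MB →
        (∃ S, MPBound s α S (MB * Real.exp (c * MB)) ∧
          MatTendsto (MPNorm s α)
            (fun m => ∑ k ∈ Finset.Icc 1 m, ((Nat.factorial k : ℂ))⁻¹ • matPow B k) S) ∧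
        (∃ S, MBound s α S (MA * Real.exp (c * MB)) ∧
          MatTendsto (MNorm s α)
            (fun m => A + ∑ k ∈ Finset.Icc 1 m,
              ((Nat.factorial k : ℂ))⁻¹ • matMul A (matPow B k)) S) ∧
        (∃ S, MBound s α S (MA * Real.exp (c * MB)) ∧
          MatTendsto (MNorm s α)
            (fun m => A + ∑ k ∈ Finset.Icc 1 m,
              ((Nat.factorial k : ℂ))⁻¹ • matMul (matPow B k) A) S) := by
  obtain ⟨C, hCpos, hC⟩ := exists_conv_const hα0 hα1
  refine ⟨4 * C, by linarith, ?_⟩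
  intro A B MA MB hA hB
  have hMA0 : 0 ≤ MA := mbound_nonneg hd hs hα0 hA
  have hMB0 : 0 ≤ MB := mpbound_nonneg hd hs hα0 hB
  have hexp : Real.exp (4 * C * MB) = ∑' n : ℕ, (4 * C * MB) ^ n / n.factorial := by
    rw [Real.exp_eq_exp_ℝ, NormedSpace.exp_eq_tsum_div]
  have hexpsum : Summable (fun n : ℕ => (4 * C * MB) ^ n / n.factorial) :=
    Real.summable_pow_div_factorial _
  have hpow := mpbound_matPow hd hs hα0 hC hB
  have hfact : ∀ k : ℕ, ‖((Nat.factorial k : ℂ))⁻¹‖ = ((Nat.factorial k : ℝ))⁻¹ := by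
    intro k
    rw [norm_inv, Complex.norm_natCast]
  have hfact0 : ∀ k : ℕ, (0:ℝ) < (Nat.factorial k : ℝ) := fun k => by
    exact_mod_cast Nat.factorial_pos k
  refine ⟨?_, ?_, ?_⟩
  -- (i) e^B - Id
  · set F : ℕ → OddTuple d → OddTuple d → ℂ :=
      fun k => ((Nat.factorial (k+1) : ℂ))⁻¹ • matPow B (k+1) with hF
    set δ : ℕ → ℝ := fun k => (4*C)^k * MB^(k+1) / (Nat.factorial (k+1) : ℝ) with hδdef
    have hδ0 : ∀ k, 0 ≤ δ k := fun k => by positivity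
    have hδle : ∀ k, δ k ≤ MB * ((4*C*MB)^k / (Nat.factorial k : ℝ)) := by
      intro k
      have h1 : (4*C)^k * MB^(k+1) = MB * (4*C*MB)^k := by
        rw [mul_pow]; ring
      show (4*C)^k * MB^(k+1) / (Nat.factorial (k+1) : ℝ) ≤ _
      rw [h1, mul_div_assoc]
      apply mul_le_mul_of_nonneg_left _ hMB0
      apply div_le_div_of_nonneg_left (by positivity) (hfact0 k)
      exact_mod_cast Nat.factorial_le (Nat.le_succ k)
    have hmaj : Summable (fun k => MB * ((4*C*MB)^k / (Nat.factorial k : ℝ))) :=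
      hexpsum.mul_left MB
    have hδsum : Summable δ := Summable.of_nonneg_of_le hδ0 hδle hmaj
    have hb : ∀ (k : ℕ) (a b : OddTuple d),
        mwtPlus s α (wE a) (wE b) * blockNorm (F k) (wE a) (wE b) ≤ δ k := by
      intro k a b
      show mwtPlus s α (wE a) (wE b) *
        blockNorm (((Nat.factorial (k+1) : ℂ))⁻¹ • matPow B (k+1)) (wE a) (wE b) ≤ δ k
      rw [blockNorm_smul, hfact]
      have h1 := hpow k a b
      calc mwtPlus s α (wE a) (wE b) * (((Nat.factorial (k+1) : ℝ))⁻¹ *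
            blockNorm (matPow B (k+1)) (wE a) (wE b))
          = ((Nat.factorial (k+1) : ℝ))⁻¹ * (mwtPlus s α (wE a) (wE b) *
            blockNorm (matPow B (k+1)) (wE a) (wE b)) := by ring
        _ ≤ ((Nat.factorial (k+1) : ℝ))⁻¹ * ((4*C)^k * MB^(k+1)) :=
            mul_le_mul_of_nonneg_left h1 (by positivity)
        _ = δ k := by rw [hδdef]; field_simp
    obtain ⟨S, hS1, hS2⟩ := factG (W := mwtPlus s α) hd
      (fun N M hN hM => one_le_mwtPlus hs hα0.le hN hM) F δ hδ0 hδsum hb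
    have htsum : ∑' k, δ k ≤ MB * Real.exp (4 * C * MB) := by
      calc ∑' k, δ k ≤ ∑' k, MB * ((4*C*MB)^k / (Nat.factorial k : ℝ)) :=
            Summable.tsum_le_tsum hδle hδsum hmaj
        _ = MB * ∑' k, (4*C*MB)^k / (Nat.factorial k : ℝ) := tsum_mul_left
        _ = MB * Real.exp (4 * C * MB) := by rw [hexp]
    refine ⟨S, fun a b => le_trans (hS1 a b) htsum, ?_⟩
    show Filter.Tendsto (fun m => MPNorm s α
      ((∑ k ∈ Finset.Icc 1 m, ((Nat.factorial k : ℂ))⁻¹ • matPow B k) - S))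
      Filter.atTop (nhds 0)
    have hTmP : ∀ m : ℕ, (∑ k ∈ Finset.Icc 1 m, ((Nat.factorial k : ℂ))⁻¹ • matPow B k)
        = (fun x y => ∑ k ∈ Finset.range m, F k x y) := by
      intro m
      funext x y
      rw [Finset.sum_apply, Finset.sum_apply]
      rw [← Finset.Ico_add_one_right_eq_Icc, Finset.sum_Ico_eq_sum_range]
      try simp only [Nat.add_sub_cancel]
      exact Finset.sum_congr rfl fun k _ => by rw [Nat.add_comm 1 k]
    apply hS2.congr
    intro m
    rw [← hTmP m]
    rfl
  -- (ii) A e^B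
  · set F : ℕ → OddTuple d → OddTuple d → ℂ := fun k =>
      Nat.rec A (fun n _ => ((Nat.factorial (n+1) : ℂ))⁻¹ • matMul A (matPow B (n+1))) k
      with hF
    have hFS : ∀ n : ℕ, F (n+1) = ((Nat.factorial (n+1) : ℂ))⁻¹ • matMul A (matPow B (n+1)) :=
      fun n => rfl
    set δ : ℕ → ℝ := fun k => MA * (4*C*MB)^k / (Nat.factorial k : ℝ) with hδdef
    have hδ0 : ∀ k, 0 ≤ δ k := fun k => by positivity
    have hδsum : Summable δ := by
      apply (hexpsum.mul_left MA).congr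
      intro k
      exact (mul_div_assoc MA ((4*C*MB)^k) ((Nat.factorial k : ℝ))).symm
    have hb : ∀ (k : ℕ) (a b : OddTuple d),
        mwt s α (wE a) (wE b) * blockNorm (F k) (wE a) (wE b) ≤ δ k := by
      intro k a b
      cases k with
      | zero =>
          calc mwt s α (wE a) (wE b) * blockNorm (F 0) (wE a) (wE b) ≤ MA := hA a b
            _ = δ 0 := by show MA = MA * (4*C*MB)^0 / (Nat.factorial 0 : ℝ); norm_num
      | succ n =>
          rw [hFS n, blockNorm_smul, hfact]
          have h1 := mbound_matMul hd hs hα0 hC hA (hpow n) a b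
          have hpos := hfact0 (n+1)
          have hx : 0 ≤ MA * (4*C*MB)^(n+1) / (Nat.factorial (n+1) : ℝ) := by positivity
          calc mwt s α (wE a) (wE b) * (((Nat.factorial (n+1) : ℝ))⁻¹ *
                blockNorm (matMul A (matPow B (n+1))) (wE a) (wE b))
              = ((Nat.factorial (n+1) : ℝ))⁻¹ * (mwt s α (wE a) (wE b) *
                blockNorm (matMul A (matPow B (n+1))) (wE a) (wE b)) := by ring
            _ ≤ ((Nat.factorial (n+1) : ℝ))⁻¹ * (MA * ((4*C)^n * MB^(n+1)) * C) :=
                mul_le_mul_of_nonneg_left h1 (by positivity)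
            _ = (MA * (4*C*MB)^(n+1) / (Nat.factorial (n+1) : ℝ)) / 4 := by
                rw [show (4*C*MB)^(n+1) = (4*C)^(n+1) * MB^(n+1) from (mul_pow _ _ _)]
                field_simp
                ring
            _ ≤ δ (n+1) := by
                show _ ≤ MA * (4*C*MB)^(n+1) / (Nat.factorial (n+1) : ℝ)
                linarith
    obtain ⟨S, hS1, hS2⟩ := factG (W := mwt s α) hd
      (fun N M hN hM => one_le_mwt hs hα0.le hN hM) F δ hδ0 hδsum hb
    have htsum : ∑' k, δ k ≤ MA * Real.exp (4 * C * MB) := by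
      calc ∑' k, δ k = ∑' k, MA * ((4*C*MB)^k / (Nat.factorial k : ℝ)) :=
            tsum_congr fun k => mul_div_assoc MA ((4*C*MB)^k) ((Nat.factorial k : ℝ))
        _ = MA * ∑' k, (4*C*MB)^k / (Nat.factorial k : ℝ) := tsum_mul_left
        _ = MA * Real.exp (4 * C * MB) := by rw [hexp]
        _ ≤ MA * Real.exp (4 * C * MB) := le_refl _
    refine ⟨S, fun a b => le_trans (hS1 a b) htsum, ?_⟩
    show Filter.Tendsto (fun m => MNorm s α
      ((A + ∑ k ∈ Finset.Icc 1 m, ((Nat.factorial k : ℂ))⁻¹ • matMul A (matPow B k)) - S))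
      Filter.atTop (nhds 0)
    have hTmP : ∀ m : ℕ,
        (A + ∑ k ∈ Finset.Icc 1 m, ((Nat.factorial k : ℂ))⁻¹ • matMul A (matPow B k))
        = (fun x y => ∑ k ∈ Finset.range (m+1), F k x y) := by
      intro m
      funext x y
      show A x y + (∑ k ∈ Finset.Icc 1 m,
        ((Nat.factorial k : ℂ))⁻¹ • matMul A (matPow B k)) x y
        = ∑ k ∈ Finset.range (m+1), F k x y
      rw [Finset.sum_apply, Finset.sum_apply, Finset.sum_range_succ']
      rw [← Finset.Ico_add_one_right_eq_Icc, Finset.sum_Ico_eq_sum_range]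
      try simp only [Nat.add_sub_cancel]
      rw [add_comm (A x y)]
      congr 1
      exact Finset.sum_congr rfl fun k _ => by rw [Nat.add_comm 1 k]
    have h3 := hS2.comp (Filter.tendsto_add_atTop_nat 1)
    apply h3.congr
    intro m
    show sInf _ = MNorm s α _
    rw [← hTmP m]
    rfl
  -- (iii) e^B A
  · set F : ℕ → OddTuple d → OddTuple d → ℂ := fun k =>
      Nat.rec A (fun n _ => ((Nat.factorial (n+1) : ℂ))⁻¹ • matMul (matPow B (n+1)) A) k
      with hF
    have hFS : ∀ n : ℕ, F (n+1) = ((Nat.factorial (n+1) : ℂ))⁻¹ • matMul (matPow B (n+1)) A :=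
      fun n => rfl
    set δ : ℕ → ℝ := fun k => MA * (4*C*MB)^k / (Nat.factorial k : ℝ) with hδdef
    have hδ0 : ∀ k, 0 ≤ δ k := fun k => by positivity
    have hδsum : Summable δ := by
      apply (hexpsum.mul_left MA).congr
      intro k
      exact (mul_div_assoc MA ((4*C*MB)^k) ((Nat.factorial k : ℝ))).symm
    have hb : ∀ (k : ℕ) (a b : OddTuple d),
        mwt s α (wE a) (wE b) * blockNorm (F k) (wE a) (wE b) ≤ δ k := by
      intro k a b
      cases k with
      | zero =>
          calc mwt s α (wE a) (wE b) * blockNorm (F 0) (wE a) (wE b) ≤ MA := hA a b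
            _ = δ 0 := by show MA = MA * (4*C*MB)^0 / (Nat.factorial 0 : ℝ); norm_num
      | succ n =>
          rw [hFS n, blockNorm_smul, hfact]
          have h1 := mbound_matMul' hd hs hα0 hC hA (hpow n) a b
          have hpos := hfact0 (n+1)
          have hx : 0 ≤ MA * (4*C*MB)^(n+1) / (Nat.factorial (n+1) : ℝ) := by positivity
          calc mwt s α (wE a) (wE b) * (((Nat.factorial (n+1) : ℝ))⁻¹ *
                blockNorm (matMul (matPow B (n+1)) A) (wE a) (wE b))
              = ((Nat.factorial (n+1) : ℝ))⁻¹ * (mwt s α (wE a) (wE b) *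
                blockNorm (matMul (matPow B (n+1)) A) (wE a) (wE b)) := by ring
            _ ≤ ((Nat.factorial (n+1) : ℝ))⁻¹ * (((4*C)^n * MB^(n+1)) * MA * C) :=
                mul_le_mul_of_nonneg_left h1 (by positivity)
            _ = (MA * (4*C*MB)^(n+1) / (Nat.factorial (n+1) : ℝ)) / 4 := by
                rw [show (4*C*MB)^(n+1) = (4*C)^(n+1) * MB^(n+1) from (mul_pow _ _ _)]
                field_simp
                ring
            _ ≤ δ (n+1) := by
                show _ ≤ MA * (4*C*MB)^(n+1) / (Nat.factorial (n+1) : ℝ)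
                linarith
    obtain ⟨S, hS1, hS2⟩ := factG (W := mwt s α) hd
      (fun N M hN hM => one_le_mwt hs hα0.le hN hM) F δ hδ0 hδsum hb
    have htsum : ∑' k, δ k ≤ MA * Real.exp (4 * C * MB) := by
      calc ∑' k, δ k = ∑' k, MA * ((4*C*MB)^k / (Nat.factorial k : ℝ)) :=
            tsum_congr fun k => mul_div_assoc MA ((4*C*MB)^k) ((Nat.factorial k : ℝ))
        _ = MA * ∑' k, (4*C*MB)^k / (Nat.factorial k : ℝ) := tsum_mul_left
        _ = MA * Real.exp (4 * C * MB) := by rw [hexp]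
        _ ≤ MA * Real.exp (4 * C * MB) := le_refl _
    refine ⟨S, fun a b => le_trans (hS1 a b) htsum, ?_⟩
    show Filter.Tendsto (fun m => MNorm s α
      ((A + ∑ k ∈ Finset.Icc 1 m, ((Nat.factorial k : ℂ))⁻¹ • matMul (matPow B k) A) - S))
      Filter.atTop (nhds 0)
    have hTmP : ∀ m : ℕ,
        (A + ∑ k ∈ Finset.Icc 1 m, ((Nat.factorial k : ℂ))⁻¹ • matMul (matPow B k) A)
        = (fun x y => ∑ k ∈ Finset.range (m+1), F k x y) := by
      intro m
      funext x y
      show A x y + (∑ k ∈ Finset.Icc 1 m,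
        ((Nat.factorial k : ℂ))⁻¹ • matMul (matPow B k) A) x y
        = ∑ k ∈ Finset.range (m+1), F k x y
      rw [Finset.sum_apply, Finset.sum_apply, Finset.sum_range_succ']
      rw [← Finset.Ico_add_one_right_eq_Icc, Finset.sum_Ico_eq_sum_range]
      try simp only [Nat.add_sub_cancel]
      rw [add_comm (A x y)]
      congr 1
      exact Finset.sum_congr rfl fun k _ => by rw [Nat.add_comm 1 k]
    have h3 := hS2.comp (Filter.tendsto_add_atTop_nat 1)
    apply h3.congr
    intro m
    show sInf _ = MNorm s α _
    rw [← hTmP m]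
    rfl
end
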